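/- arXiv:math/0010224 — 6 statements merged into one kernel-verified Lean document; each statement's English description precedes it below -/
import Mathlib

section
/- Let f : [-1,1] → X be a c-similar embedding (c > 0) into a metric space X and g : X → Y a K-Lipschitz embedding with K-Lipschitz inverse (K ≥ 1). If t ∈ (-1,1) satisfies μ(g(f([-1,t]))) = μ(g(f([t,1]))), then |t| ≤ (K²−1)/(K²+1) < 1. -/
/-- The Morse `μ_k`-length of the arc parametrized by `f` on `[a,b]`:
the supremum, over monotone chains `c 0 ≤ c 1 ≤ ⋯ ≤ c k` in `[a,b]`, of
`min_i d(f (c (i-1)), f (c i))`. -/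
noncomputable def morseMuK {X : Type*} [MetricSpace X] (f : ℝ → X) (a b : ℝ) (k : ℕ) : ℝ :=
  sSup {m : ℝ | ∃ c : Fin (k + 1) → ℝ, Monotone c ∧ (∀ i, c i ∈ Set.Icc a b) ∧
    m = ⨅ i : Fin k, dist (f (c i.castSucc)) (f (c i.succ))}

/-- The Morse `μ`-length `μ = ∑_{k ≥ 1} 2^{-k} μ_k` of the arc parametrized by `f` on `[a,b]`. -/
noncomputable def morseMu {X : Type*} [MetricSpace X] (f : ℝ → X) (a b : ℝ) : ℝ :=
  ∑' k : ℕ, (1 / 2 ^ (k + 1) : ℝ) * morseMuK f a b (k + 1)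

/-- auxiliary constant `S = ∑ 2^{-(k+1)}/(k+1)` -/
noncomputable def morseSaux : ℝ := ∑' k : ℕ, (1 / 2 ^ (k + 1) : ℝ) * (1 / (k + 1))

lemma morseSaux_summable : Summable (fun k : ℕ => (1 / 2 ^ (k + 1) : ℝ) * (1 / (k + 1))) := by
  have hgeo : Summable (fun k : ℕ => ((1:ℝ)/2) ^ k) :=
    summable_geometric_of_lt_one (by norm_num) (by norm_num)
  refine Summable.of_nonneg_of_le (fun k => by positivity) (fun k => ?_) hgeo
  have h1 : (1 / ((k:ℝ) + 1)) ≤ 1 := by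
    rw [div_le_one (by positivity)]
    linarith [Nat.cast_nonneg (α := ℝ) k]
  have h2 : (1 / 2 ^ (k + 1) : ℝ) ≤ 1 / 2 ^ k := by
    apply one_div_le_one_div_of_le (by positivity)
    apply pow_le_pow_right₀ (by norm_num) (Nat.le_succ k)
  have h3 : ((1:ℝ)/2) ^ k = 1 / 2 ^ k := one_div_pow 2 k
  calc (1 / 2 ^ (k + 1) : ℝ) * (1 / (k + 1)) ≤ (1 / 2 ^ (k + 1) : ℝ) * 1 := by
        gcongr
    _ = (1 / 2 ^ (k + 1) : ℝ) := mul_one _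
    _ ≤ 1 / 2 ^ k := h2
    _ = ((1:ℝ)/2) ^ k := h3.symm

lemma morseSaux_pos : 0 < morseSaux := by
  have h := Summable.le_tsum morseSaux_summable 0 (fun j _ => by positivity)
  have h0 : (1 / 2 ^ (0 + 1) : ℝ) * (1 / ((0:ℕ) + 1)) = 1/2 := by norm_num
  rw [morseSaux]
  linarith

/-- Two-sided bound on `morseMuK` for maps with two-sided Lipschitz-type distance bounds. -/
lemma morseMuK_bounds {Z : Type*} [MetricSpace Z] (F : ℝ → Z) (C1 C2 : ℝ) (hC2 : 0 ≤ C2)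
    (hlow : ∀ x ∈ Set.Icc (-1:ℝ) 1, ∀ y ∈ Set.Icc (-1:ℝ) 1, C1 * |x - y| ≤ dist (F x) (F y))
    (hup : ∀ x ∈ Set.Icc (-1:ℝ) 1, ∀ y ∈ Set.Icc (-1:ℝ) 1, dist (F x) (F y) ≤ C2 * |x - y|)
    (a b : ℝ) (hab : a ≤ b) (ha : -1 ≤ a) (hb : b ≤ 1) (k : ℕ) :
    C1 * (b - a) / (k + 1) ≤ morseMuK F a b (k + 1) ∧
      morseMuK F a b (k + 1) ≤ C2 * (b - a) / (k + 1) := by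
  have hmemIcc : ∀ x, x ∈ Set.Icc a b → x ∈ Set.Icc (-1:ℝ) 1 := by
    rintro x ⟨h1, h2⟩; exact ⟨le_trans ha h1, le_trans h2 hb⟩
  have hnpos : (0:ℝ) < (k:ℝ) + 1 := by positivity
  -- upper bound
  have hupper : morseMuK F a b (k + 1) ≤ C2 * (b - a) / (k + 1) := by
    apply Real.sSup_le
    · rintro m ⟨ch, hmono, hmem, rfl⟩
      -- find a small gap
      have key : ∃ i : Fin (k + 1), ch i.succ - ch i.castSucc ≤ (b - a) / (k + 1) := by
        by_contra hcon
        push_neg at hcon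
        set v : ℕ → ℝ := fun i => ch ⟨min i (k + 1), by omega⟩ with hv
        have hterm : ∀ i : Fin (k + 1),
            ch i.succ - ch i.castSucc = v (↑i + 1) - v ↑i := by
          intro i
          have h1 : (⟨min (↑i + 1) (k + 1), by omega⟩ : Fin (k + 2)) = i.succ := by
            ext; simp [Nat.min_eq_left (Nat.succ_le_of_lt i.isLt)]
          have h2 : (⟨min (↑i : ℕ) (k + 1), by omega⟩ : Fin (k + 2)) = i.castSucc := by
            ext; simp [Nat.min_eq_left (le_of_lt i.isLt)]
          simp only [hv, h1, h2]
        have hsum : ∑ i : Fin (k + 1), (ch i.succ - ch i.castSucc) = v (k + 1) - v 0 := by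
          calc ∑ i : Fin (k + 1), (ch i.succ - ch i.castSucc)
              = ∑ i : Fin (k + 1), (v (↑i + 1) - v ↑i) := by
                exact Finset.sum_congr rfl (fun i _ => hterm i)
            _ = ∑ i ∈ Finset.range (k + 1), (v (i + 1) - v i) :=
                Fin.sum_univ_eq_sum_range (fun i => v (i + 1) - v i) (k + 1)
            _ = v (k + 1) - v 0 := Finset.sum_range_sub v (k + 1)
        have hle : v (k + 1) - v 0 ≤ b - a := by
          have h1 := (hmem ⟨min (k+1) (k+1), by omega⟩).2
          have h2 := (hmem ⟨min 0 (k+1), by omega⟩).1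
          simp only [hv]
          linarith
        have hlt : ∑ i : Fin (k + 1), ((b - a) / (k + 1)) <
            ∑ i : Fin (k + 1), (ch i.succ - ch i.castSucc) := by
          apply Finset.sum_lt_sum_of_nonempty
          · exact Finset.univ_nonempty
          · intro i _; exact hcon i
        have hconst : ∑ _i : Fin (k + 1), ((b - a) / (k + 1)) = b - a := by
          rw [Finset.sum_const, Finset.card_univ, Fintype.card_fin]
          rw [nsmul_eq_mul]; push_cast; field_simp
        rw [hconst, hsum] at hlt
        linarith
      obtain ⟨i, hi⟩ := key
      have hbdd : BddBelow (Set.range fun j : Fin (k+1) =>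
          dist (F (ch j.castSucc)) (F (ch j.succ))) := by
        refine ⟨0, ?_⟩; rintro _ ⟨j, rfl⟩; positivity
      have h1 : (⨅ j : Fin (k+1), dist (F (ch j.castSucc)) (F (ch j.succ)))
          ≤ dist (F (ch i.castSucc)) (F (ch i.succ)) := ciInf_le hbdd i
      have h2 := hup _ (hmemIcc _ (hmem i.castSucc)) _ (hmemIcc _ (hmem i.succ))
      have hmono' : ch i.castSucc ≤ ch i.succ := hmono (Fin.castSucc_le_succ i)
      have habs : |ch i.castSucc - ch i.succ| = ch i.succ - ch i.castSucc := by
        rw [abs_sub_comm, abs_of_nonneg (by linarith)]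
      rw [habs] at h2
      calc (⨅ j : Fin (k+1), dist (F (ch j.castSucc)) (F (ch j.succ)))
          ≤ C2 * (ch i.succ - ch i.castSucc) := le_trans h1 h2
        _ ≤ C2 * ((b - a) / (k + 1)) := by gcongr
        _ = C2 * (b - a) / (k + 1) := by ring
    · apply div_nonneg (mul_nonneg hC2 (by linarith)) (by positivity)
  refine ⟨?_, hupper⟩
  -- lower bound: equally spaced chain
  set δ : ℝ := (b - a) / (k + 1) with hδ
  have hδnn : 0 ≤ δ := div_nonneg (by linarith) (by positivity)
  set ch : Fin (k + 2) → ℝ := fun j => a + (j : ℕ) * δ with hch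
  have hmono : Monotone ch := by
    intro j j' hj
    have : ((j : ℕ) : ℝ) ≤ ((j' : ℕ) : ℝ) := by exact_mod_cast hj
    simp only [hch]
    nlinarith
  have hmem : ∀ j, ch j ∈ Set.Icc a b := by
    intro j
    constructor
    · simp only [hch]; nlinarith [Nat.cast_nonneg (α := ℝ) (j : ℕ)]
    · have hjle : ((j : ℕ) : ℝ) ≤ (k : ℝ) + 1 := by
        have := j.isLt; exact_mod_cast Nat.lt_succ_iff.mp this
      simp only [hch, hδ]
      have : ((j : ℕ) : ℝ) * ((b - a) / (k + 1)) ≤ ((k:ℝ) + 1) * ((b - a) / (k + 1)) := by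
        apply mul_le_mul_of_nonneg_right hjle
        positivity
      have heq2 : ((k:ℝ) + 1) * ((b - a) / (k + 1)) = b - a := by field_simp
      linarith [heq2 ▸ this]
  have hgap : ∀ i : Fin (k + 1), ch i.succ - ch i.castSucc = δ := by
    intro i
    simp only [hch, Fin.val_succ, Fin.coe_castSucc]
    push_cast
    ring
  set m : ℝ := ⨅ i : Fin (k + 1), dist (F (ch i.castSucc)) (F (ch i.succ)) with hm
  have hmemset : m ∈ {m : ℝ | ∃ c : Fin (k + 2) → ℝ, Monotone c ∧ (∀ i, c i ∈ Set.Icc a b) ∧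
      m = ⨅ i : Fin (k + 1), dist (F (c i.castSucc)) (F (c i.succ))} :=
    ⟨ch, hmono, hmem, rfl⟩
  have hbddA : BddAbove {m : ℝ | ∃ c : Fin (k + 2) → ℝ, Monotone c ∧ (∀ i, c i ∈ Set.Icc a b) ∧
      m = ⨅ i : Fin (k + 1), dist (F (c i.castSucc)) (F (c i.succ))} := by
    refine ⟨C2 * 2, ?_⟩
    rintro m' ⟨ch', hmono', hmem', rfl⟩
    have hbdd : BddBelow (Set.range fun j : Fin (k+1) =>
        dist (F (ch' j.castSucc)) (F (ch' j.succ))) := by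
      refine ⟨0, ?_⟩; rintro _ ⟨j, rfl⟩; positivity
    have h1 := ciInf_le hbdd (0 : Fin (k + 1))
    have h2 := hup _ (hmemIcc _ (hmem' (Fin.castSucc 0))) _ (hmemIcc _ (hmem' (Fin.succ 0)))
    have hx := hmemIcc _ (hmem' (Fin.castSucc 0))
    have hy := hmemIcc _ (hmem' (Fin.succ 0))
    have habs : |ch' (Fin.castSucc 0) - ch' (Fin.succ 0)| ≤ 2 := by
      rw [abs_le]
      constructor <;> [linarith [hx.1, hy.2]; linarith [hx.2, hy.1]]
    calc (⨅ j : Fin (k+1), dist (F (ch' j.castSucc)) (F (ch' j.succ)))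
        ≤ C2 * |ch' (Fin.castSucc 0) - ch' (Fin.succ 0)| := le_trans h1 h2
      _ ≤ C2 * 2 := by gcongr
  have hle : C1 * (b - a) / (k + 1) ≤ m := by
    rw [hm]
    apply le_ciInf
    intro i
    have h := hlow _ (hmemIcc _ (hmem i.castSucc)) _ (hmemIcc _ (hmem i.succ))
    have habs : |ch i.castSucc - ch i.succ| = δ := by
      rw [abs_sub_comm]
      have := hgap i
      rw [show ch i.succ - ch i.castSucc = δ from this] at *
      rw [abs_of_nonneg hδnn]
    rw [habs] at h
    calc C1 * (b - a) / (k + 1) = C1 * δ := by rw [hδ]; ring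
      _ ≤ _ := h
  calc C1 * (b - a) / (k + 1) ≤ m := hle
    _ ≤ _ := le_csSup hbddA hmemset

/-- Two-sided bound on `morseMu`. -/
lemma morseMu_bounds {Z : Type*} [MetricSpace Z] (F : ℝ → Z) (C1 C2 : ℝ)
    (hC1 : 0 ≤ C1) (hC2 : 0 ≤ C2)
    (hlow : ∀ x ∈ Set.Icc (-1:ℝ) 1, ∀ y ∈ Set.Icc (-1:ℝ) 1, C1 * |x - y| ≤ dist (F x) (F y))
    (hup : ∀ x ∈ Set.Icc (-1:ℝ) 1, ∀ y ∈ Set.Icc (-1:ℝ) 1, dist (F x) (F y) ≤ C2 * |x - y|)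
    (a b : ℝ) (hab : a ≤ b) (ha : -1 ≤ a) (hb : b ≤ 1) :
    C1 * (b - a) * morseSaux ≤ morseMu F a b ∧ morseMu F a b ≤ C2 * (b - a) * morseSaux := by
  have hmu := fun k => morseMuK_bounds F C1 C2 hC2 hlow hup a b hab ha hb k
  have hterm_le : ∀ k : ℕ, (1 / 2 ^ (k + 1) : ℝ) * morseMuK F a b (k + 1) ≤
      (C2 * (b - a)) * ((1 / 2 ^ (k + 1) : ℝ) * (1 / (k + 1))) := by
    intro k
    calc (1 / 2 ^ (k + 1) : ℝ) * morseMuK F a b (k + 1)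
        ≤ (1 / 2 ^ (k + 1) : ℝ) * (C2 * (b - a) / (k + 1)) := by
          gcongr
          exact (hmu k).2
      _ = (C2 * (b - a)) * ((1 / 2 ^ (k + 1) : ℝ) * (1 / (k + 1))) := by ring
  have hterm_ge : ∀ k : ℕ, (C1 * (b - a)) * ((1 / 2 ^ (k + 1) : ℝ) * (1 / (k + 1))) ≤
      (1 / 2 ^ (k + 1) : ℝ) * morseMuK F a b (k + 1) := by
    intro k
    calc (C1 * (b - a)) * ((1 / 2 ^ (k + 1) : ℝ) * (1 / (k + 1)))
        = (1 / 2 ^ (k + 1) : ℝ) * (C1 * (b - a) / (k + 1)) := by ring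
      _ ≤ (1 / 2 ^ (k + 1) : ℝ) * morseMuK F a b (k + 1) := by
          gcongr
          exact (hmu k).1
  have hterm_nn : ∀ k : ℕ, 0 ≤ (1 / 2 ^ (k + 1) : ℝ) * morseMuK F a b (k + 1) := by
    intro k
    refine le_trans ?_ (hterm_ge k)
    have hba : (0:ℝ) ≤ b - a := by linarith
    exact mul_nonneg (mul_nonneg hC1 hba) (by positivity)
  have hsum_r : Summable (fun k : ℕ => (C2 * (b - a)) * ((1 / 2 ^ (k + 1) : ℝ) * (1 / (k + 1)))) :=
    morseSaux_summable.mul_left _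
  have hsum_l : Summable (fun k : ℕ => (C1 * (b - a)) * ((1 / 2 ^ (k + 1) : ℝ) * (1 / (k + 1)))) :=
    morseSaux_summable.mul_left _
  have hsum_m : Summable (fun k : ℕ => (1 / 2 ^ (k + 1) : ℝ) * morseMuK F a b (k + 1)) :=
    Summable.of_nonneg_of_le hterm_nn hterm_le hsum_r
  constructor
  · calc C1 * (b - a) * morseSaux
        = ∑' k : ℕ, (C1 * (b - a)) * ((1 / 2 ^ (k + 1) : ℝ) * (1 / (k + 1))) :=
          (tsum_mul_left).symm
      _ ≤ morseMu F a b := Summable.tsum_le_tsum hterm_ge hsum_l hsum_m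
  · calc morseMu F a b
        ≤ ∑' k : ℕ, (C2 * (b - a)) * ((1 / 2 ^ (k + 1) : ℝ) * (1 / (k + 1))) :=
          Summable.tsum_le_tsum hterm_le hsum_m hsum_r
      _ = C2 * (b - a) * morseSaux := tsum_mul_left

/-- If `f : [-1,1] → X` is a `c`-similar embedding (`c > 0`) and `g : X → Y` is a
`K`-Lipschitz embedding with `K`-Lipschitz inverse (`K ≥ 1`), then the unique balance
point `t` with `μ(g(f([-1,t]))) = μ(g(f([t,1])))` satisfies
`|t| ≤ (K²−1)/(K²+1) < 1`. -/
theorem balance_point_bound {X Y : Type*} [MetricSpace X] [MetricSpace Y]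
    (f : ℝ → X) (c : ℝ) (hc : 0 < c)
    (hf : ∀ x ∈ Set.Icc (-1 : ℝ) 1, ∀ y ∈ Set.Icc (-1 : ℝ) 1,
      dist (f x) (f y) = c * |x - y|)
    (g : X → Y) (K : ℝ) (hK : 1 ≤ K)
    (hg : ∀ x y : X, dist x y / K ≤ dist (g x) (g y) ∧ dist (g x) (g y) ≤ K * dist x y)
    (hgi : Function.Injective g)
    (t : ℝ) (ht : t ∈ Set.Ioo (-1 : ℝ) 1)
    (heq : morseMu (g ∘ f) (-1) t = morseMu (g ∘ f) t 1) :
    |t| ≤ (K ^ 2 - 1) / (K ^ 2 + 1) ∧ (K ^ 2 - 1) / (K ^ 2 + 1) < 1 := by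
  have hKpos : (0:ℝ) < K := lt_of_lt_of_le one_pos hK
  have hlow : ∀ x ∈ Set.Icc (-1:ℝ) 1, ∀ y ∈ Set.Icc (-1:ℝ) 1,
      (c / K) * |x - y| ≤ dist ((g ∘ f) x) ((g ∘ f) y) := by
    intro x hx y hy
    have h1 := (hg (f x) (f y)).1
    rw [hf x hx y hy] at h1
    calc (c / K) * |x - y| = c * |x - y| / K := by ring
      _ ≤ _ := h1
  have hup : ∀ x ∈ Set.Icc (-1:ℝ) 1, ∀ y ∈ Set.Icc (-1:ℝ) 1,
      dist ((g ∘ f) x) ((g ∘ f) y) ≤ (K * c) * |x - y| := by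
    intro x hx y hy
    have h2 := (hg (f x) (f y)).2
    rw [hf x hx y hy] at h2
    calc dist ((g ∘ f) x) ((g ∘ f) y) ≤ K * (c * |x - y|) := h2
      _ = (K * c) * |x - y| := by ring
  have hC1 : (0:ℝ) ≤ c / K := le_of_lt (div_pos hc hKpos)
  have hC2 : (0:ℝ) ≤ K * c := le_of_lt (mul_pos hKpos hc)
  obtain ⟨ht1, ht2⟩ := ht
  have hL := morseMu_bounds (g ∘ f) (c / K) (K * c) hC1 hC2 hlow hup (-1) t
    (by linarith) le_rfl (by linarith)
  have hR := morseMu_bounds (g ∘ f) (c / K) (K * c) hC1 hC2 hlow hup t 1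
    (by linarith) (by linarith) le_rfl
  have hS := morseSaux_pos
  have hcS : (0:ℝ) < c * morseSaux := mul_pos hc hS
  -- (c/K)(t+1)S ≤ Kc(1-t)S and (c/K)(1-t)S ≤ Kc(t+1)S
  have h1 : (c / K) * (t - (-1)) * morseSaux ≤ (K * c) * (1 - t) * morseSaux :=
    le_trans hL.1 (heq ▸ hR.2)
  have h2 : (c / K) * (1 - t) * morseSaux ≤ (K * c) * (t - (-1)) * morseSaux :=
    le_trans hR.1 (heq ▸ hL.2)
  have key1 : t + 1 ≤ K ^ 2 * (1 - t) := by
    have h1' : c * (t + 1) * morseSaux ≤ K * ((K * c) * (1 - t) * morseSaux) := by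
      have := mul_le_mul_of_nonneg_left h1 (le_of_lt hKpos)
      calc c * (t + 1) * morseSaux = K * ((c / K) * (t - (-1)) * morseSaux) := by
            field_simp; ring
        _ ≤ _ := this
    have h1'' : (t + 1) * (c * morseSaux) ≤ (K ^ 2 * (1 - t)) * (c * morseSaux) := by
      linear_combination h1'
    exact le_of_mul_le_mul_right h1'' hcS
  have key2 : 1 - t ≤ K ^ 2 * (t + 1) := by
    have h2' : c * (1 - t) * morseSaux ≤ K * ((K * c) * (t - (-1)) * morseSaux) := by
      have := mul_le_mul_of_nonneg_left h2 (le_of_lt hKpos)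
      calc c * (1 - t) * morseSaux = K * ((c / K) * (1 - t) * morseSaux) := by
            field_simp
        _ ≤ _ := this
    have h2'' : (1 - t) * (c * morseSaux) ≤ (K ^ 2 * (t + 1)) * (c * morseSaux) := by
      linear_combination h2'
    exact le_of_mul_le_mul_right h2'' hcS
  have hden : (0:ℝ) < K ^ 2 + 1 := by positivity
  constructor
  · rw [abs_le]
    constructor
    · rw [neg_le, le_div_iff₀ hden]
      nlinarith [key2]
    · rw [le_div_iff₀ hden]
      nlinarith [key1]
  · rw [div_lt_one hden]
    linarith
end

section
/- If A₁ is a subarc of an arc A in a metric space and A₁ ≠ A, then μ(A₁) < μ(A), where μ denotes the Morse μ-length. -/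
open Set Metric

namespace MorseAux

variable {X : Type*} [MetricSpace X]

/-- The defining set of `morseMuK`. -/
def S (f : ℝ → X) (a b : ℝ) (k : ℕ) : Set ℝ :=
  {m : ℝ | ∃ c : Fin (k + 1) → ℝ, Monotone c ∧ (∀ i, c i ∈ Set.Icc a b) ∧
    m = ⨅ i : Fin k, dist (f (c i.castSucc)) (f (c i.succ))}

lemma morseMuK_eq (f : ℝ → X) (a b : ℝ) (k : ℕ) : morseMuK f a b k = sSup (S f a b k) := rfl

lemma bddBelow_dist (f : ℝ → X) {n : ℕ} (c : Fin (n+1) → ℝ) :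
    BddBelow (Set.range fun i : Fin n => dist (f (c i.castSucc)) (f (c i.succ))) := by
  refine ⟨0, ?_⟩; rintro x ⟨i, rfl⟩; exact dist_nonneg

lemma zero_mem_S (f : ℝ → X) {a b : ℝ} (hab : a ≤ b) (k : ℕ) : (0:ℝ) ∈ S f a b (k+1) := by
  refine ⟨fun _ => a, monotone_const, fun _ => ⟨le_refl a, hab⟩, ?_⟩
  simp

lemma mem_S_le_diam (f : ℝ → X) {a b : ℝ} (hb : Bornology.IsBounded (f '' Icc a b)) {k : ℕ}
    {m : ℝ} (hm : m ∈ S f a b (k+1)) : m ≤ diam (f '' Icc a b) := by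
  obtain ⟨c, hmono, hmem, rfl⟩ := hm
  refine le_trans (ciInf_le (bddBelow_dist f c) 0) ?_
  exact dist_le_diam_of_mem hb (mem_image_of_mem f (hmem _)) (mem_image_of_mem f (hmem _))

lemma bddAbove_S (f : ℝ → X) {a b : ℝ} (hb : Bornology.IsBounded (f '' Icc a b)) (k : ℕ) :
    BddAbove (S f a b (k+1)) :=
  ⟨diam (f '' Icc a b), fun _ hm => mem_S_le_diam f hb hm⟩

lemma muK_le_diam (f : ℝ → X) {a b : ℝ} (hb : Bornology.IsBounded (f '' Icc a b)) (k : ℕ) :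
    morseMuK f a b (k+1) ≤ diam (f '' Icc a b) :=
  Real.sSup_le (fun _ hm => mem_S_le_diam f hb hm) diam_nonneg

lemma muK_nonneg (f : ℝ → X) {a b : ℝ} (hab : a ≤ b)
    (hb : Bornology.IsBounded (f '' Icc a b)) (k : ℕ) :
    0 ≤ morseMuK f a b (k+1) :=
  le_csSup (bddAbove_S f hb k) (zero_mem_S f hab k)

lemma muK_mono_interval (f : ℝ → X) {a b a' b' : ℝ} (h1 : a ≤ a') (h2 : a' ≤ b') (h3 : b' ≤ b)
    (hb : Bornology.IsBounded (f '' Icc a b)) (k : ℕ) :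
    morseMuK f a' b' (k+1) ≤ morseMuK f a b (k+1) := by
  refine csSup_le_csSup (bddAbove_S f hb k) ⟨0, zero_mem_S f h2 k⟩ ?_
  rintro m ⟨c, hmono, hmem, rfl⟩
  exact ⟨c, hmono, fun i => Icc_subset_Icc h1 h3 (hmem i), rfl⟩

lemma muK_pos (f : ℝ → X) {a b : ℝ} (hab : a < b)
    (hb : Bornology.IsBounded (f '' Icc a b)) (hi : Set.InjOn f (Icc a b)) (k : ℕ) :
    0 < morseMuK f a b (k+1) := by
  set d : ℝ := (b - a) / (k + 1) with hd
  have hdpos : 0 < d := div_pos (sub_pos.2 hab) (by positivity)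
  set c : Fin (k+2) → ℝ := fun i => a + (i : ℕ) * d with hc
  have hmono : Monotone c := by
    intro i j hij
    have : ((i : ℕ) : ℝ) ≤ ((j : ℕ) : ℝ) := by exact_mod_cast hij
    simp only [hc]
    nlinarith
  have hmem : ∀ i, c i ∈ Icc a b := by
    intro i
    have hik : ((i : ℕ) : ℝ) ≤ (k + 1 : ℝ) := by
      have := i.isLt
      exact_mod_cast Nat.lt_succ_iff.1 this
    constructor
    · simp only [hc]; nlinarith [mul_nonneg (Nat.cast_nonneg (α := ℝ) (i : ℕ)) hdpos.le]
    · simp only [hc]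
      have : ((i : ℕ) : ℝ) * d ≤ (k + 1 : ℝ) * d := by nlinarith
      have h2 : (k + 1 : ℝ) * d = b - a := by
        rw [hd]; field_simp
      linarith
  have hne : ∀ i : Fin (k+1), c i.castSucc ≠ c i.succ := by
    intro i
    have e1 : ((i.castSucc : ℕ) : ℝ) = ((i : ℕ) : ℝ) := by simp
    have e2 : ((i.succ : ℕ) : ℝ) = ((i : ℕ) : ℝ) + 1 := by simp
    simp only [hc]
    intro h
    rw [e1, e2] at h
    nlinarith
  have hpos : ∀ i : Fin (k+1), 0 < dist (f (c i.castSucc)) (f (c i.succ)) := by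
    intro i
    rw [dist_pos]
    exact fun h => hne i (hi (hmem _) (hmem _) h)
  have hmemS : (⨅ i : Fin (k+1), dist (f (c i.castSucc)) (f (c i.succ))) ∈ S f a b (k+1) :=
    ⟨c, hmono, hmem, rfl⟩
  have hw : 0 < Finset.univ.inf' ⟨0, Finset.mem_univ 0⟩
      (fun i : Fin (k+1) => dist (f (c i.castSucc)) (f (c i.succ))) :=
    Finset.lt_inf'_iff _ |>.2 (fun i _ => hpos i)
  have hwle : Finset.univ.inf' ⟨0, Finset.mem_univ 0⟩
      (fun i : Fin (k+1) => dist (f (c i.castSucc)) (f (c i.succ)))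
      ≤ ⨅ i : Fin (k+1), dist (f (c i.castSucc)) (f (c i.succ)) :=
    le_ciInf fun i => Finset.inf'_le _ (Finset.mem_univ i)
  exact lt_of_lt_of_le (lt_of_lt_of_le hw hwle) (le_csSup (bddAbove_S f hb k) hmemS)

lemma muK_eventually_small (f : ℝ → X) {a b a' b' : ℝ} (h1 : a ≤ a') (h2 : a' ≤ b')
    (h3 : b' ≤ b) (hc : ContinuousOn f (Icc a b)) {ε : ℝ} (hε : 0 < ε) :
    ∃ K : ℕ, ∀ k ≥ K, morseMuK f a' b' k < ε := by
  have huc : UniformContinuousOn f (Icc a b) :=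
    isCompact_Icc.uniformContinuousOn_of_continuous hc
  obtain ⟨δ, hδ, hδ'⟩ := (Metric.uniformContinuousOn_iff).1 huc (ε/2) (by linarith)
  obtain ⟨N, hN⟩ := exists_nat_gt ((b' - a') / δ)
  refine ⟨N + 1, fun k hk => ?_⟩
  have hkN : ((b' - a') / δ) < (k : ℝ) := lt_of_lt_of_le hN (by exact_mod_cast le_trans (Nat.le_succ N) hk)
  have hkδ : b' - a' < k * δ := by
    rw [div_lt_iff₀ hδ] at hkN
    linarith
  have hsub : Icc a' b' ⊆ Icc a b := Icc_subset_Icc h1 h3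
  have hmain : ∀ m ∈ S f a' b' k, m ≤ ε / 2 := by
    rintro m ⟨c, hmono, hmem, rfl⟩
    by_contra hgt
    push_neg at hgt
    have hDi : ∀ i : Fin k, ε / 2 < dist (f (c i.castSucc)) (f (c i.succ)) := by
      intro i
      calc ε / 2 < ⨅ i : Fin k, dist (f (c i.castSucc)) (f (c i.succ)) := hgt
        _ ≤ dist (f (c i.castSucc)) (f (c i.succ)) := ciInf_le (bddBelow_dist f c) i
    have hgap : ∀ i : Fin k, c i.castSucc + δ ≤ c i.succ := by
      intro i
      by_contra hlt
      push_neg at hlt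
      have hle : c i.castSucc ≤ c i.succ := hmono (le_of_lt Fin.castSucc_lt_succ)
      have : dist (c i.castSucc) (c i.succ) < δ := by
        rw [Real.dist_eq, abs_lt]; constructor <;> linarith
      exact absurd (hδ' _ (hsub (hmem _)) _ (hsub (hmem _)) this) (not_lt.2 (le_of_lt (hDi i)))
    have hstep : ∀ (p : ℕ) (hp : p < k), c ⟨p, Nat.lt_succ_of_lt hp⟩ + δ ≤
        c ⟨p + 1, Nat.succ_lt_succ hp⟩ := by
      intro p hp
      exact hgap ⟨p, hp⟩
    have key : ∀ (n : ℕ) (hn : n < k + 1), c ⟨0, Nat.succ_pos k⟩ + n * δ ≤ c ⟨n, hn⟩ := by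
      intro n
      induction n with
      | zero => intro hn; simp
      | succ p ih =>
        intro hn
        have hp : p < k := Nat.lt_of_succ_lt_succ hn
        have h1' := ih (Nat.lt_succ_of_lt hp)
        have h2' := hstep p hp
        push_cast
        linarith
    have hk0 : (k : ℕ) < k + 1 := Nat.lt_succ_self k
    have hfin := key k hk0
    have hb' : c ⟨k, hk0⟩ ≤ b' := (hmem _).2
    have ha' : a' ≤ c ⟨0, Nat.succ_pos k⟩ := (hmem _).1
    linarith
  have : morseMuK f a' b' k ≤ ε / 2 := Real.sSup_le hmain (by linarith)
  linarith

lemma append_le (f : ℝ → X) {a b a' b' ε : ℝ} (h1 : a ≤ a') (h2 : a' ≤ b') (h3 : b' ≤ b)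
    (hb : Bornology.IsBounded (f '' Icc a b))
    (hε : ∀ t ∈ Icc a' b', ε ≤ dist (f t) (f b)) (k : ℕ) :
    min (morseMuK f a' b' (k+1)) ε ≤ morseMuK f a b (k+2) := by
  apply le_of_forall_lt
  intro x hx
  rw [lt_min_iff] at hx
  obtain ⟨hx1, hx2⟩ := hx
  rw [morseMuK_eq] at hx1
  obtain ⟨m, hmS, hxm⟩ := exists_lt_of_lt_csSup ⟨0, zero_mem_S f h2 k⟩ hx1
  obtain ⟨c, hmono, hmem, rfl⟩ := hmS
  set c' : Fin (k+3) → ℝ := Fin.snoc c b with hc'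
  have hc'cast : ∀ j : Fin (k+2), c' j.castSucc = c j := fun j => by simp [hc']
  have hc'last : c' (Fin.last (k+2)) = b := by simp [hc']
  have hmono' : Monotone c' := by
    intro i j hij
    rcases Fin.eq_castSucc_or_eq_last i with ⟨i', rfl⟩ | rfl
    · rcases Fin.eq_castSucc_or_eq_last j with ⟨j', rfl⟩ | rfl
      · rw [hc'cast, hc'cast]
        exact hmono (by exact_mod_cast hij)
      · rw [hc'cast, hc'last]
        exact le_trans (hmem i').2 h3
    · rcases Fin.eq_castSucc_or_eq_last j with ⟨j', rfl⟩ | rfl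
      · have : (j'.castSucc : Fin (k+3)) < Fin.last (k+2) := Fin.castSucc_lt_last j'
        exact absurd hij (not_le.2 this)
      · exact le_refl _
  have hmem' : ∀ i, c' i ∈ Icc a b := by
    intro i
    rcases Fin.eq_castSucc_or_eq_last i with ⟨i', rfl⟩ | rfl
    · rw [hc'cast]; exact Icc_subset_Icc h1 h3 (hmem i')
    · rw [hc'last]; exact ⟨le_trans h1 (le_trans h2 h3), le_refl b⟩
  have hvS : (⨅ i : Fin (k+2), dist (f (c' i.castSucc)) (f (c' i.succ))) ∈ S f a b (k+2) :=
    ⟨c', hmono', hmem', rfl⟩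
  have hxv : x < ⨅ i : Fin (k+2), dist (f (c' i.castSucc)) (f (c' i.succ)) := by
    have hlow : ∀ i : Fin (k+2), min (⨅ i : Fin (k+1),
        dist (f (c i.castSucc)) (f (c i.succ))) ε ≤ dist (f (c' i.castSucc)) (f (c' i.succ)) := by
      intro i
      induction i using Fin.lastCases with
      | last =>
        have e1 : c' (Fin.last (k+1)).castSucc = c (Fin.last (k+1)) := hc'cast _
        have e2 : c' (Fin.last (k+1)).succ = b := by rw [Fin.succ_last]; exact hc'last
        rw [e1, e2]
        exact le_trans (min_le_right _ _) (hε _ (hmem _))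
      | cast j =>
        have e1 : c' j.castSucc.castSucc = c j.castSucc := hc'cast _
        have e2 : c' j.castSucc.succ = c j.succ := by
          rw [Fin.succ_castSucc]; exact hc'cast _
        rw [e1, e2]
        exact le_trans (min_le_left _ _) (ciInf_le (bddBelow_dist f c) j)
    refine lt_of_lt_of_le (lt_min hxm hx2) (le_ciInf hlow)
  exact lt_of_lt_of_le hxv (le_csSup (bddAbove_S f hb (k+1)) hvS)

lemma prepend_le (f : ℝ → X) {a b a' b' ε : ℝ} (h1 : a ≤ a') (h2 : a' ≤ b') (h3 : b' ≤ b)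
    (hb : Bornology.IsBounded (f '' Icc a b))
    (hε : ∀ t ∈ Icc a' b', ε ≤ dist (f a) (f t)) (k : ℕ) :
    min (morseMuK f a' b' (k+1)) ε ≤ morseMuK f a b (k+2) := by
  apply le_of_forall_lt
  intro x hx
  rw [lt_min_iff] at hx
  obtain ⟨hx1, hx2⟩ := hx
  rw [morseMuK_eq] at hx1
  obtain ⟨m, hmS, hxm⟩ := exists_lt_of_lt_csSup ⟨0, zero_mem_S f h2 k⟩ hx1
  obtain ⟨c, hmono, hmem, rfl⟩ := hmS
  set c' : Fin (k+3) → ℝ := Fin.cons a c with hc'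
  have hc'succ : ∀ j : Fin (k+2), c' j.succ = c j := fun j => by simp [hc']
  have hc'zero : c' 0 = a := by simp [hc']
  have hmono' : Monotone c' := by
    intro i j hij
    rcases Fin.eq_zero_or_eq_succ i with rfl | ⟨i', rfl⟩
    · rcases Fin.eq_zero_or_eq_succ j with rfl | ⟨j', rfl⟩
      · exact le_refl _
      · rw [hc'zero, hc'succ]
        exact le_trans h1 (hmem j').1
    · rcases Fin.eq_zero_or_eq_succ j with rfl | ⟨j', rfl⟩
      · exact absurd hij (not_le.2 (Fin.succ_pos i'))
      · rw [hc'succ, hc'succ]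
        exact hmono (Fin.succ_le_succ_iff.1 hij)
  have hmem' : ∀ i, c' i ∈ Icc a b := by
    intro i
    rcases Fin.eq_zero_or_eq_succ i with rfl | ⟨i', rfl⟩
    · rw [hc'zero]; exact ⟨le_refl a, le_trans h1 (le_trans h2 h3)⟩
    · rw [hc'succ]; exact Icc_subset_Icc h1 h3 (hmem i')
  have hvS : (⨅ i : Fin (k+2), dist (f (c' i.castSucc)) (f (c' i.succ))) ∈ S f a b (k+2) :=
    ⟨c', hmono', hmem', rfl⟩
  have hxv : x < ⨅ i : Fin (k+2), dist (f (c' i.castSucc)) (f (c' i.succ)) := by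
    have hlow : ∀ i : Fin (k+2), min (⨅ i : Fin (k+1),
        dist (f (c i.castSucc)) (f (c i.succ))) ε ≤ dist (f (c' i.castSucc)) (f (c' i.succ)) := by
      intro i
      induction i using Fin.cases with
      | zero =>
        have e1 : c' (0 : Fin (k+2)).castSucc = a := by
          rw [Fin.castSucc_zero]; exact hc'zero
        have e2 : c' (0 : Fin (k+2)).succ = c 0 := hc'succ 0
        rw [e1, e2]
        exact le_trans (min_le_right _ _) (hε _ (hmem _))
      | succ j =>
        have e1 : c' j.succ.castSucc = c j.castSucc := by
          rw [← Fin.succ_castSucc]; exact hc'succ _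
        have e2 : c' j.succ.succ = c j.succ := hc'succ _
        rw [e1, e2]
        exact le_trans (min_le_left _ _) (ciInf_le (bddBelow_dist f c) j)
    refine lt_of_lt_of_le (lt_min hxm hx2) (le_ciInf hlow)
  exact lt_of_lt_of_le hxv (le_csSup (bddAbove_S f hb (k+1)) hvS)

end MorseAux

open MorseAux in
/-- If `A₁` is a proper subarc (or point) of an arc `A` in a metric space, then
`μ(A₁) < μ(A)`.  The arc `A` is parametrized by an injective continuous `γ` on `[a,b]`
and the subarc `A₁` corresponds to `[a',b'] ⊆ [a,b]` with `[a',b'] ≠ [a,b]`. -/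
theorem morseMu_lt_of_proper_subarc {X : Type*} [MetricSpace X]
    (γ : ℝ → X) (a b a' b' : ℝ) (hab : a < b)
    (h1 : a ≤ a') (h2 : a' ≤ b') (h3 : b' ≤ b) (hne : ¬(a' = a ∧ b' = b))
    (hγc : ContinuousOn γ (Set.Icc a b)) (hγi : Set.InjOn γ (Set.Icc a b)) :
    morseMu γ a' b' < morseMu γ a b := by
  classical
  have hsub : Icc a' b' ⊆ Icc a b := Icc_subset_Icc h1 h3
  have hb : Bornology.IsBounded (γ '' Icc a b) :=
    (isCompact_Icc.image_of_continuousOn hγc).isBounded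
  have hb' : Bornology.IsBounded (γ '' Icc a' b') :=
    hb.subset (image_mono hsub)
  have hclosed : IsClosed (γ '' Icc a' b') :=
    (isCompact_Icc.image_of_continuousOn (hγc.mono hsub)).isClosed
  have hne' : (γ '' Icc a' b').Nonempty := ⟨_, mem_image_of_mem _ ⟨le_refl a', h2⟩⟩
  obtain ⟨ε, hεpos, happ⟩ : ∃ ε > 0, ∀ k : ℕ,
      min (morseMuK γ a' b' (k+1)) ε ≤ morseMuK γ a b (k+2) := by
    rcases not_and_or.1 hne with hA | hB
    · have haa : a < a' := lt_of_le_of_ne h1 (Ne.symm hA)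
      have hnm : γ a ∉ γ '' Icc a' b' := by
        rintro ⟨t, ht, hteq⟩
        have hta : t = a := hγi (hsub ht) ⟨le_refl a, hab.le⟩ hteq
        have : a' ≤ a := hta ▸ ht.1
        linarith
      have hεp : 0 < infDist (γ a) (γ '' Icc a' b') :=
        (hclosed.notMem_iff_infDist_pos hne').1 hnm
      refine ⟨_, hεp, fun k => prepend_le γ h1 h2 h3 hb ?_ k⟩
      intro t ht
      exact infDist_le_dist_of_mem (mem_image_of_mem _ ht)
    · have hbb : b' < b := lt_of_le_of_ne h3 hB
      have hnm : γ b ∉ γ '' Icc a' b' := by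
        rintro ⟨t, ht, hteq⟩
        have htb : t = b := hγi (hsub ht) ⟨hab.le, le_refl b⟩ hteq
        have : b ≤ b' := htb ▸ ht.2
        linarith
      have hεp : 0 < infDist (γ b) (γ '' Icc a' b') :=
        (hclosed.notMem_iff_infDist_pos hne').1 hnm
      refine ⟨_, hεp, fun k => append_le γ h1 h2 h3 hb ?_ k⟩
      intro t ht
      rw [dist_comm]
      exact infDist_le_dist_of_mem (mem_image_of_mem _ ht)
  have hstrict : ∃ j : ℕ, morseMuK γ a' b' (j+1) < morseMuK γ a b (j+1) := by
    by_contra hcon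
    push_neg at hcon
    obtain ⟨K, hK⟩ := muK_eventually_small γ h1 h2 h3 hγc hεpos
    set k₀ := max K 1 with hk₀
    have hstep : ∀ k, k₀ ≤ k → morseMuK γ a' b' k ≤ morseMuK γ a' b' (k+1) := by
      intro k hk
      have hk1 : 1 ≤ k := le_trans (le_max_right K 1) hk
      obtain ⟨k', rfl⟩ : ∃ k', k = k' + 1 := ⟨k - 1, (Nat.succ_pred_eq_of_pos hk1).symm⟩
      have hsm : morseMuK γ a' b' (k'+1) < ε := hK _ (le_trans (le_max_left K 1) hk)
      calc morseMuK γ a' b' (k'+1) = min (morseMuK γ a' b' (k'+1)) ε := (min_eq_left hsm.le).symm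
        _ ≤ morseMuK γ a b (k'+2) := happ k'
        _ ≤ morseMuK γ a' b' (k'+2) := hcon (k'+1)
    have hge : ∀ k, k₀ ≤ k → morseMuK γ a' b' k₀ ≤ morseMuK γ a' b' k := by
      intro k hk
      induction k, hk using Nat.le_induction with
      | base => exact le_refl _
      | succ n hn ih => exact le_trans ih (hstep n hn)
    have h0 : morseMuK γ a' b' k₀ ≤ 0 := by
      by_contra hpos
      push_neg at hpos
      obtain ⟨K2, hK2⟩ := muK_eventually_small γ h1 h2 h3 hγc hpos
      exact absurd (hK2 (max k₀ K2) (le_max_right _ _)) (not_lt.2 (hge _ (le_max_left _ _)))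
    obtain ⟨j, hj⟩ : ∃ j, k₀ = j + 1 :=
      ⟨k₀ - 1, (Nat.succ_pred_eq_of_pos (le_max_right K 1)).symm⟩
    have hApos : 0 < morseMuK γ a b k₀ := hj ▸ muK_pos γ hab hb hγi j
    have hj' := hcon j
    rw [← hj] at hj'
    linarith
  obtain ⟨j, hj⟩ := hstrict
  have hptle : ∀ k : ℕ, (1/2^(k+1) : ℝ) * morseMuK γ a' b' (k+1)
      ≤ (1/2^(k+1) : ℝ) * morseMuK γ a b (k+1) := fun k =>
    mul_le_mul_of_nonneg_left (muK_mono_interval γ h1 h2 h3 hb k) (by positivity)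
  have hsumg : Summable (fun k : ℕ => (1/2^(k+1) : ℝ) * morseMuK γ a b (k+1)) := by
    apply Summable.of_nonneg_of_le
      (fun k => mul_nonneg (by positivity) (muK_nonneg γ hab.le hb k))
      (fun k => mul_le_mul_of_nonneg_left (muK_le_diam γ hb k) (by positivity))
    have he : (fun k : ℕ => (1/2^(k+1):ℝ) * diam (γ '' Icc a b)) =
        fun k : ℕ => (1/2:ℝ)^k * ((1/2) * diam (γ '' Icc a b)) := by
      funext k
      rw [← one_div_pow, pow_succ]
      ring
    rw [he]
    exact summable_geometric_two.mul_right _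
  have hsumf : Summable (fun k : ℕ => (1/2^(k+1) : ℝ) * morseMuK γ a' b' (k+1)) :=
    Summable.of_nonneg_of_le (fun k => mul_nonneg (by positivity) (muK_nonneg γ h2 hb' k))
      hptle hsumg
  exact Summable.tsum_lt_tsum hptle (mul_lt_mul_of_pos_left hj (by positivity)) hsumf hsumg
end

section
/- Let (X,d) be a proper metric space (closed bounded sets are compact), x₀ ∈ X, K ≥ 1, r ≥ 0, and let H^K_r be the set of bijections f : X → X such that (1/K)d(x,y) ≤ d(f(x),f(y)) ≤ K d(x,y) for all x,y and d(f(x₀),x₀) ≤ r and d(f⁻¹(x₀),x₀) ≤ r. Then H^K_r is compact in the topology of uniform convergence on compact sets (for both f and f⁻¹). -/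
open Set Metric

/-- The set of `K`-Lipschitz continuous self-maps moving `x₀` by at most `r`
is compact in the compact-open topology. -/
lemma lipschitz_ball_compact_aux {X : Type*} [MetricSpace X] [ProperSpace X]
    (x₀ : X) (K r : ℝ) (hK : 0 ≤ K) (hr : 0 ≤ r) :
    IsCompact {f : C(X, X) |
      (∀ x y : X, dist (f x) (f y) ≤ K * dist x y) ∧ dist (f x₀) x₀ ≤ r} := by
  set T : Set C(X, X) :=
    {f : C(X, X) | (∀ x y : X, dist (f x) (f y) ≤ K * dist x y) ∧ dist (f x₀) x₀ ≤ r}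
  apply ArzelaAscoli.isCompact_of_equicontinuous
  · -- pointwise compactness
    have himg : ContinuousMap.toFun '' T =
        {g : X → X | (∀ x y : X, dist (g x) (g y) ≤ K * dist x y) ∧ dist (g x₀) x₀ ≤ r} := by
      apply Subset.antisymm
      · rintro _ ⟨f, hf, rfl⟩; exact hf
      · rintro g ⟨hg1, hg2⟩
        have hlip : LipschitzWith (Real.toNNReal K) g := by
          intro x y
          rw [edist_dist, edist_dist, ← ENNReal.ofReal_coe_nnreal]
          rw [← ENNReal.ofReal_mul (by positivity)]
          apply ENNReal.ofReal_le_ofReal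
          calc dist (g x) (g y) ≤ K * dist x y := hg1 x y
            _ = (Real.toNNReal K : ℝ) * dist x y := by
                rw [Real.coe_toNNReal K hK]
        exact ⟨⟨g, hlip.continuous⟩, ⟨hg1, hg2⟩, rfl⟩
    rw [himg]
    apply IsCompact.of_isClosed_subset
      (isCompact_univ_pi (fun x => isCompact_closedBall x₀ (r + K * dist x x₀)))
    · have : {g : X → X | (∀ x y : X, dist (g x) (g y) ≤ K * dist x y) ∧ dist (g x₀) x₀ ≤ r}
          = (⋂ x, ⋂ y, {g : X → X | dist (g x) (g y) ≤ K * dist x y}) ∩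
            {g : X → X | dist (g x₀) x₀ ≤ r} := by
        ext g; simp [Set.mem_iInter]
      rw [this]
      apply IsClosed.inter
      · apply isClosed_iInter; intro x; apply isClosed_iInter; intro y
        exact isClosed_le (Continuous.dist (continuous_apply x) (continuous_apply y))
          continuous_const
      · exact isClosed_le (Continuous.dist ((continuous_apply x₀)) continuous_const)
          continuous_const
    · rintro g ⟨hg1, hg2⟩
      intro x _
      simp only [mem_closedBall]
      calc dist (g x) x₀ ≤ dist (g x) (g x₀) + dist (g x₀) x₀ := dist_triangle _ _ _
        _ ≤ K * dist x x₀ + r := add_le_add (hg1 x x₀) hg2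
        _ = r + K * dist x x₀ := by ring
  · -- equicontinuity
    intro x
    rw [Metric.equicontinuousAt_iff]
    intro ε hε
    refine ⟨ε / (K + 1), by positivity, fun y hy f => ?_⟩
    calc dist (f.1.1 x) (f.1.1 y) ≤ K * dist x y := f.2.1 x y
      _ ≤ K * (ε / (K + 1)) := by
          apply mul_le_mul_of_nonneg_left _ hK
          rw [dist_comm] at hy; exact hy.le
      _ < ε := by
          rw [div_eq_inv_mul, ← mul_assoc]
          calc K * (K + 1)⁻¹ * ε < 1 * ε := by
                apply mul_lt_mul_of_pos_right _ hε
                rw [mul_inv_lt_iff₀ (by positivity)]; linarith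
            _ = ε := one_mul ε

/-- Let `(X,d)` be a proper metric space, `x₀ ∈ X`, `K ≥ 1`, `r ≥ 0`.  The set `H^K_r`
of (pairs of reciprocal continuous maps representing) bijections `f` with
`(1/K)d(x,y) ≤ d(f x, f y) ≤ K d(x,y)`, `d(f x₀, x₀) ≤ r` and `d(f⁻¹ x₀, x₀) ≤ r`
is compact in the topology of uniform convergence on compact sets (for both `f` and
`f⁻¹`), i.e. in `C(X,X) × C(X,X)` with the compact-open topology. -/
theorem biLipschitz_ball_compact {X : Type*} [MetricSpace X] [ProperSpace X]
    (x₀ : X) (K r : ℝ) (hK : 1 ≤ K) (hr : 0 ≤ r) :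
    IsCompact {p : C(X, X) × C(X, X) |
      Function.LeftInverse p.2 p.1 ∧ Function.RightInverse p.2 p.1 ∧
      (∀ x y : X, dist x y / K ≤ dist (p.1 x) (p.1 y) ∧
        dist (p.1 x) (p.1 y) ≤ K * dist x y) ∧
      dist (p.1 x₀) x₀ ≤ r ∧ dist (p.2 x₀) x₀ ≤ r} := by
  have hK0 : (0:ℝ) < K := lt_of_lt_of_le one_pos hK
  set T : Set C(X, X) :=
    {f : C(X, X) | (∀ x y : X, dist (f x) (f y) ≤ K * dist x y) ∧ dist (f x₀) x₀ ≤ r}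
  have hT : IsCompact T := lipschitz_ball_compact_aux x₀ K r hK0.le hr
  apply IsCompact.of_isClosed_subset (hT.prod hT)
  · -- closedness
    have : {p : C(X, X) × C(X, X) |
        Function.LeftInverse p.2 p.1 ∧ Function.RightInverse p.2 p.1 ∧
        (∀ x y : X, dist x y / K ≤ dist (p.1 x) (p.1 y) ∧
          dist (p.1 x) (p.1 y) ≤ K * dist x y) ∧
        dist (p.1 x₀) x₀ ≤ r ∧ dist (p.2 x₀) x₀ ≤ r}
        = (⋂ x, {p : C(X, X) × C(X, X) | p.2 (p.1 x) = x}) ∩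
          ((⋂ x, {p : C(X, X) × C(X, X) | p.1 (p.2 x) = x}) ∩
          ((⋂ x, ⋂ y, ({p : C(X, X) × C(X, X) | dist x y / K ≤ dist (p.1 x) (p.1 y)} ∩
            {p : C(X, X) × C(X, X) | dist (p.1 x) (p.1 y) ≤ K * dist x y})) ∩
          ({p : C(X, X) × C(X, X) | dist (p.1 x₀) x₀ ≤ r} ∩
           {p : C(X, X) × C(X, X) | dist (p.2 x₀) x₀ ≤ r}))) := by
      ext p
      simp only [Set.mem_setOf_eq, Set.mem_inter_iff, Set.mem_iInter,
        Function.LeftInverse, Function.RightInverse, forall_and]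

    rw [this]
    apply IsClosed.inter
    · apply isClosed_iInter; intro x
      exact isClosed_eq
        ((continuous_eval.comp
          (continuous_snd.prodMk
            ((continuous_eval_const x).comp continuous_fst))))
        continuous_const
    apply IsClosed.inter
    · apply isClosed_iInter; intro x
      exact isClosed_eq
        ((continuous_eval.comp
          (continuous_fst.prodMk
            ((continuous_eval_const x).comp continuous_snd))))
        continuous_const
    apply IsClosed.inter
    · apply isClosed_iInter; intro x; apply isClosed_iInter; intro y
      apply IsClosed.inter
      · exact isClosed_le continuous_const
          (Continuous.dist
            ((continuous_eval_const x).comp continuous_fst)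
            ((continuous_eval_const y).comp continuous_fst))
      · exact isClosed_le
          (Continuous.dist
            ((continuous_eval_const x).comp continuous_fst)
            ((continuous_eval_const y).comp continuous_fst))
          continuous_const
    apply IsClosed.inter
    · exact isClosed_le
        (Continuous.dist ((continuous_eval_const x₀).comp continuous_fst)
          continuous_const) continuous_const
    · exact isClosed_le
        (Continuous.dist ((continuous_eval_const x₀).comp continuous_snd)
          continuous_const) continuous_const
  · -- subset of T × T
    rintro ⟨f, g⟩ ⟨hli, hri, hbl, hf0, hg0⟩
    constructor
    · exact ⟨fun x y => (hbl x y).2, hf0⟩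
    · refine ⟨fun x y => ?_, hg0⟩
      have := (hbl (g x) (g y)).1
      rw [hri x, hri y] at this
      calc dist (g x) (g y) = K * (dist (g x) (g y) / K) := by field_simp
        _ ≤ K * dist x y := mul_le_mul_of_nonneg_left this hK0.le
end

section
/- If X is a proper metric space with a distinguished point, then the group of Lipschitz homeomorphisms of X (homeomorphisms f with f and f⁻¹ Lipschitz) is σ-compact in the compact-open topology. -/
open Metric Set

/-- The set of `n`-Lipschitz continuous self-maps moving the basepoint by at most `n`
is compact in the compact-open topology, by Arzelà–Ascoli. -/
lemma lipschitz_ball_compact {X : Type*} [MetricSpace X] [ProperSpace X] (x₀ : X) (n : ℕ) :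
    IsCompact {f : C(X, X) | LipschitzWith n f ∧ dist (f x₀) x₀ ≤ n} := by
  set S : Set C(X, X) := {f | LipschitzWith n f ∧ dist (f x₀) x₀ ≤ n}
  have himg : ContinuousMap.toFun '' S
      = {g : X → X | LipschitzWith n g ∧ dist (g x₀) x₀ ≤ n} := by
    ext g
    constructor
    · rintro ⟨f, hf, rfl⟩; exact hf
    · rintro ⟨hg, hg0⟩
      exact ⟨⟨g, hg.continuous⟩, ⟨hg, hg0⟩, rfl⟩
  apply ArzelaAscoli.isCompact_of_equicontinuous
  · rw [himg]
    have hsub : {g : X → X | LipschitzWith n g ∧ dist (g x₀) x₀ ≤ n}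
        ⊆ univ.pi fun x => closedBall x₀ ((n : ℝ) * dist x x₀ + n) := by
      rintro g ⟨hg, hg0⟩ x -
      rw [mem_closedBall]
      calc dist (g x) x₀ ≤ dist (g x) (g x₀) + dist (g x₀) x₀ := dist_triangle _ _ _
        _ ≤ (n : ℝ) * dist x x₀ + n := by
            have := hg.dist_le_mul x x₀
            push_cast at this ⊢
            linarith
    have hclosed : IsClosed {g : X → X | LipschitzWith n g ∧ dist (g x₀) x₀ ≤ n} := by
      have h1 : IsClosed {g : X → X | LipschitzWith n g} := by
        have : {g : X → X | LipschitzWith n g}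
            = ⋂ x, ⋂ y, {g : X → X | dist (g x) (g y) ≤ (n : ℝ) * dist x y} := by
          ext g
          simp only [mem_setOf_eq, mem_iInter, lipschitzWith_iff_dist_le_mul]
          push_cast
          rfl
        rw [this]
        exact isClosed_iInter fun x => isClosed_iInter fun y =>
          isClosed_le ((continuous_apply x).dist (continuous_apply y)) continuous_const
      have h2 : IsClosed {g : X → X | dist (g x₀) x₀ ≤ (n : ℝ)} :=
        isClosed_le ((continuous_apply x₀).dist continuous_const) continuous_const
      exact h1.inter h2
    exact (isCompact_univ_pi fun x => isCompact_closedBall _ _).of_isClosed_subset hclosed hsub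
  · intro x
    rw [Metric.equicontinuousAt_iff]
    intro ε hε
    refine ⟨ε / (n + 1), by positivity, fun y hy f => ?_⟩
    have hf : LipschitzWith n (f : C(X, X)) := f.2.1
    calc dist ((f : C(X,X)) x) ((f : C(X,X)) y) ≤ (n : ℝ) * dist x y := hf.dist_le_mul x y
      _ ≤ (n : ℝ) * (ε / (n + 1)) := by
          have : dist x y ≤ ε / (n + 1) := by rw [dist_comm]; exact hy.le
          exact mul_le_mul_of_nonneg_left this (by positivity)
      _ < ε := by
          have hn : (n : ℝ) / (n + 1) < 1 := by
            rw [div_lt_one (by positivity)]; linarith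
          calc (n : ℝ) * (ε / (n + 1)) = (n / (n+1)) * ε := by ring
            _ < 1 * ε := mul_lt_mul_of_pos_right hn hε
            _ = ε := one_mul ε

/-- If `X` is a proper metric space with a distinguished point, the group of Lipschitz
homeomorphisms of `X` (homeomorphisms `f` with `f` and `f⁻¹` Lipschitz), viewed via
`f ↦ (f, f⁻¹)` inside `C(X,X) × C(X,X)` with the compact-open topology, is
σ-compact. -/
theorem lipschitzHomeoGroup_sigmaCompact {X : Type*} [MetricSpace X] [ProperSpace X]
    (x₀ : X) :
    IsSigmaCompact {p : C(X, X) × C(X, X) |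
      Function.LeftInverse p.2 p.1 ∧ Function.RightInverse p.2 p.1 ∧
      ∃ K : NNReal, LipschitzWith K p.1 ∧ LipschitzWith K p.2} := by
  set C : Set (C(X, X) × C(X, X)) :=
    {p | (∀ x, p.2 (p.1 x) = x) ∧ (∀ x, p.1 (p.2 x) = x)} with hC
  have hCclosed : IsClosed C := by
    have h1 : ∀ x : X, IsClosed {p : C(X, X) × C(X, X) | p.2 (p.1 x) = x} := by
      intro x
      have : Continuous fun p : C(X, X) × C(X, X) => p.2 (p.1 x) := by
        have h1 : Continuous fun p : C(X, X) × C(X, X) => p.1 x :=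
          (continuous_eval_const x).comp continuous_fst
        exact continuous_eval.comp (continuous_snd.prodMk h1)
      exact isClosed_eq this continuous_const
    have h2 : ∀ x : X, IsClosed {p : C(X, X) × C(X, X) | p.1 (p.2 x) = x} := by
      intro x
      have : Continuous fun p : C(X, X) × C(X, X) => p.1 (p.2 x) := by
        have h1 : Continuous fun p : C(X, X) × C(X, X) => p.2 x :=
          (continuous_eval_const x).comp continuous_snd
        exact continuous_eval.comp (continuous_fst.prodMk h1)
      exact isClosed_eq this continuous_const
    have : C = (⋂ x, {p : C(X, X) × C(X, X) | p.2 (p.1 x) = x})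
        ∩ ⋂ x, {p : C(X, X) × C(X, X) | p.1 (p.2 x) = x} := by
      ext p; simp [hC, forall_and]
    rw [this]
    exact ((isClosed_iInter h1).inter (isClosed_iInter h2))
  refine ⟨fun n => ({f : C(X, X) | LipschitzWith n f ∧ dist (f x₀) x₀ ≤ n} ×ˢ
      {f : C(X, X) | LipschitzWith n f ∧ dist (f x₀) x₀ ≤ n}) ∩ C, fun n =>
    ((lipschitz_ball_compact x₀ n).prod (lipschitz_ball_compact x₀ n)).inter_right hCclosed, ?_⟩
  ext p
  simp only [mem_iUnion, mem_inter_iff, mem_prod, mem_setOf_eq, hC]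
  constructor
  · rintro ⟨n, ⟨⟨h1, _⟩, ⟨h2, _⟩⟩, hl, hr⟩
    exact ⟨hl, hr, n, h1, h2⟩
  · rintro ⟨hl, hr, K, h1, h2⟩
    obtain ⟨n, hn⟩ := exists_nat_ge (max (K : ℝ) (max (dist (p.1 x₀) x₀) (dist (p.2 x₀) x₀)))
    have hKn : (K : NNReal) ≤ (n : NNReal) := by
      have := le_trans (le_max_left _ _) hn
      exact_mod_cast this
    refine ⟨n, ⟨⟨h1.weaken hKn, ?_⟩, ⟨h2.weaken hKn, ?_⟩⟩, hl, hr⟩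
    · exact le_trans (le_trans (le_max_left _ _) (le_max_right _ _)) hn
    · exact le_trans (le_trans (le_max_right _ _) (le_max_right _ _)) hn
end

section
/- Let Q = [−∞,∞]^ℕ and fix n ≥ 1. For any neighborhoods U of [−n,n]^ℕ and V of 0 in Q, there exists a homeomorphism h : Q → Q such that h = id on Q ∖ U, h(Q ∖ s) = Q ∖ s where s = ℝ^ℕ ⊆ Q, h([−n,n]^ℕ) ⊆ V, and whenever h(x) = y then |y_i| ≤ |x_i| for each i ≥ 1. -/
set_option linter.unusedSectionVars false
open Function Set
namespace HCShrink


noncomputable def cl (δ nn p : ℝ) : ℝ := max δ (min nn p)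

noncomputable def gg (δ nn c p q y : ℝ) : ℝ :=
  if y ≤ -c then y
  else if y ≤ -(cl δ nn p) then (c - cl δ nn q) / (c - cl δ nn p) * (y + c) - c
  else if y ≤ cl δ nn p then (cl δ nn q / cl δ nn p) * y
  else if y ≤ c then (c - cl δ nn q) / (c - cl δ nn p) * (y - c) + c
  else y

variable {δ nn c p q y : ℝ}

lemma cl_pos (h0 : 0 < δ) : 0 < cl δ nn p := lt_max_of_lt_left h0
lemma cl_le (h1 : δ ≤ nn) : cl δ nn p ≤ nn := max_le h1 (min_le_left _ _)
lemma cl_lt (h1 : δ ≤ nn) (h2 : nn < c) : cl δ nn p < c := lt_of_le_of_lt (cl_le h1) h2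
lemma cl_eq (ha : δ ≤ p) (hb : p ≤ nn) : cl δ nn p = p := by
  rw [cl, min_eq_right hb, max_eq_right ha]

lemma gg_cont (h0 : 0 < δ) (h1 : δ ≤ nn) (h2 : nn < c) :
    Continuous fun z : ℝ × ℝ × ℝ => gg δ nn c z.1 z.2.1 z.2.2 := by
  have hclc : Continuous fun z : ℝ × ℝ × ℝ => cl δ nn z.1 :=
    continuous_const.max (continuous_const.min continuous_fst)
  have hclq : Continuous fun z : ℝ × ℝ × ℝ => cl δ nn z.2.1 :=
    continuous_const.max (continuous_const.min (continuous_fst.comp continuous_snd))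
  have hy : Continuous fun z : ℝ × ℝ × ℝ => z.2.2 := continuous_snd.comp continuous_snd
  have hne : ∀ z : ℝ × ℝ × ℝ, c - cl δ nn z.1 ≠ 0 := fun z =>
    ne_of_gt (by linarith [cl_lt (p := z.1) h1 h2])
  have hne' : ∀ z : ℝ × ℝ × ℝ, cl δ nn z.1 ≠ 0 := fun z => ne_of_gt (cl_pos h0)
  have hβ : Continuous fun z : ℝ × ℝ × ℝ => (c - cl δ nn z.2.1) / (c - cl δ nn z.1) :=
    (continuous_const.sub hclq).div (continuous_const.sub hclc) hne
  have hL3 : Continuous fun z : ℝ × ℝ × ℝ =>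
      (c - cl δ nn z.2.1) / (c - cl δ nn z.1) * (z.2.2 + c) - c :=
    ((hβ.mul (hy.add continuous_const)).sub continuous_const)
  have hL2 : Continuous fun z : ℝ × ℝ × ℝ =>
      (c - cl δ nn z.2.1) / (c - cl δ nn z.1) * (z.2.2 - c) + c :=
    ((hβ.mul (hy.sub continuous_const)).add continuous_const)
  have hL1 : Continuous fun z : ℝ × ℝ × ℝ => cl δ nn z.2.1 / cl δ nn z.1 * z.2.2 :=
    (hclq.div hclc hne').mul hy
  have c4 : Continuous fun z : ℝ × ℝ × ℝ =>
      if z.2.2 ≤ c then (c - cl δ nn z.2.1) / (c - cl δ nn z.1) * (z.2.2 - c) + c else z.2.2 :=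
    Continuous.if_le hL2 hy hy continuous_const (fun z hz => by rw [hz]; ring)
  have c3 : Continuous fun z : ℝ × ℝ × ℝ =>
      if z.2.2 ≤ cl δ nn z.1 then (cl δ nn z.2.1 / cl δ nn z.1) * z.2.2
      else if z.2.2 ≤ c then (c - cl δ nn z.2.1) / (c - cl δ nn z.1) * (z.2.2 - c) + c
      else z.2.2 := by
    refine Continuous.if_le hL1 c4 hy hclc (fun z hz => ?_)
    have hcc : cl δ nn z.1 ≤ c := (cl_lt h1 h2).le
    rw [hz, if_pos hcc]
    have h5 := hne z
    have h6 := hne' z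
    field_simp
    ring
  have c2 : Continuous fun z : ℝ × ℝ × ℝ =>
      if z.2.2 ≤ -(cl δ nn z.1) then (c - cl δ nn z.2.1) / (c - cl δ nn z.1) * (z.2.2 + c) - c
      else if z.2.2 ≤ cl δ nn z.1 then (cl δ nn z.2.1 / cl δ nn z.1) * z.2.2
      else if z.2.2 ≤ c then (c - cl δ nn z.2.1) / (c - cl δ nn z.1) * (z.2.2 - c) + c
      else z.2.2 := by
    refine Continuous.if_le hL3 c3 hy hclc.neg (fun z hz => ?_)
    have hcc : -(cl δ nn z.1) ≤ cl δ nn z.1 := by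
      have := cl_pos (nn := nn) (p := z.1) h0; linarith
    rw [hz, if_pos hcc]
    have h5 := hne z
    have h6 := hne' z
    field_simp
    ring
  unfold gg
  refine Continuous.if_le hy c2 hy continuous_const (fun z hz => ?_)
  have hcc : z.2.2 ≤ -(cl δ nn z.1) := by
    have := cl_lt (p := z.1) h1 h2; linarith [hz.le]
  rw [if_pos hcc, hz]
  field_simp
  ring


lemma gg1 (hy : y ≤ -c) : gg δ nn c p q y = y := by
  unfold gg; rw [if_pos hy]

section eval
variable (hp1 : δ ≤ p) (hp2 : p ≤ nn) (hq1 : δ ≤ q) (hq2 : q ≤ nn)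
include hp1 hp2 hq1 hq2

lemma gg2 (hy1 : ¬ y ≤ -c) (hy2 : y ≤ -p) :
    gg δ nn c p q y = (c - q) / (c - p) * (y + c) - c := by
  unfold gg; rw [cl_eq hp1 hp2, cl_eq hq1 hq2, if_neg hy1, if_pos hy2]

lemma gg3 (hy1 : ¬ y ≤ -c) (hy2 : ¬ y ≤ -p) (hy3 : y ≤ p) :
    gg δ nn c p q y = q / p * y := by
  unfold gg; rw [cl_eq hp1 hp2, cl_eq hq1 hq2, if_neg hy1, if_neg hy2, if_pos hy3]

lemma gg4 (hy1 : ¬ y ≤ -c) (hy2 : ¬ y ≤ -p) (hy3 : ¬ y ≤ p) (hy4 : y ≤ c) :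
    gg δ nn c p q y = (c - q) / (c - p) * (y - c) + c := by
  unfold gg; rw [cl_eq hp1 hp2, cl_eq hq1 hq2, if_neg hy1, if_neg hy2, if_neg hy3, if_pos hy4]

lemma gg5 (h0 : 0 < δ) (h2 : nn < c) (hy4 : ¬ y ≤ c) : gg δ nn c p q y = y := by
  have hc0 : (0:ℝ) < c := by linarith
  have hy := lt_of_not_ge hy4
  unfold gg
  rw [cl_eq hp1 hp2, cl_eq hq1 hq2, if_neg (by linarith), if_neg (by push_neg; linarith),
    if_neg (by push_neg; linarith), if_neg hy4]
end eval

section main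
variable (h0 : 0 < δ) (h2 : nn < c) (hp1 : δ ≤ p) (hp2 : p ≤ nn) (hq1 : δ ≤ q) (hq2 : q ≤ nn)
include h0 h2 hp1 hp2 hq1 hq2

lemma gg_inv : gg δ nn c q p (gg δ nn c p q y) = y := by
  have hp0 : 0 < p := lt_of_lt_of_le h0 hp1
  have hq0 : 0 < q := lt_of_lt_of_le h0 hq1
  have hpc : p < c := lt_of_le_of_lt hp2 h2
  have hqc : q < c := lt_of_le_of_lt hq2 h2
  have hcp : (0:ℝ) < c - p := by linarith
  have hcq : (0:ℝ) < c - q := by linarith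
  have hβ : 0 < (c - q) / (c - p) := div_pos hcq hcp
  have hs : 0 < q / p := div_pos hq0 hp0
  rcases le_or_gt y (-c) with hy1 | hy1
  · rw [gg1 hy1, gg1 hy1]
  rcases le_or_gt y (-p) with hy2 | hy2
  · rw [gg2 hp1 hp2 hq1 hq2 (not_le.2 hy1) hy2]
    set v := (c - q) / (c - p) * (y + c) - c with hv
    have hyc : 0 < y + c := by linarith
    have h3 : -c < v := by
      have : 0 < (c - q) / (c - p) * (y + c) := mul_pos hβ hyc
      simp only [hv]; linarith
    have h4 : v ≤ -q := by
      have : (c - q) / (c - p) * (y + c) ≤ (c - q) / (c - p) * (c - p) :=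
        mul_le_mul_of_nonneg_left (by linarith) hβ.le
      rw [div_mul_cancel₀ _ (ne_of_gt hcp)] at this
      simp only [hv]; linarith
    rw [gg2 hq1 hq2 hp1 hp2 (not_le.2 h3) h4]
    simp only [hv]
    field_simp
    ring
  rcases le_or_gt y p with hy3 | hy3
  · rw [gg3 hp1 hp2 hq1 hq2 (not_le.2 hy1) (not_le.2 hy2) hy3]
    set v := q / p * y with hv
    have h3 : -q < v := by
      have := mul_lt_mul_of_pos_left hy2 hs
      rw [mul_neg, div_mul_cancel₀ _ (ne_of_gt hp0)] at this
      simp only [hv]; linarith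
    have h4 : v ≤ q := by
      have := mul_le_mul_of_nonneg_left hy3 hs.le
      rw [div_mul_cancel₀ _ (ne_of_gt hp0)] at this
      simp only [hv]; linarith
    rw [gg3 hq1 hq2 hp1 hp2 (by push_neg; linarith) (not_le.2 h3) h4]
    simp only [hv]
    field_simp
  rcases le_or_gt y c with hy4 | hy4
  · rw [gg4 hp1 hp2 hq1 hq2 (not_le.2 hy1) (not_le.2 hy2) (not_le.2 hy3) hy4]
    set v := (c - q) / (c - p) * (y - c) + c with hv
    have h3 : q < v := by
      have e1 : (c - q) / (c - p) * (p - c) = -(c - q) := by field_simp; ring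
      have h5 := mul_lt_mul_of_pos_left (show p - c < y - c by linarith) hβ
      simp only [hv]; linarith
    have h4 : v ≤ c := by
      have : (c - q) / (c - p) * (y - c) ≤ 0 :=
        mul_nonpos_of_nonneg_of_nonpos hβ.le (by linarith)
      simp only [hv]; linarith
    rw [gg4 hq1 hq2 hp1 hp2 (by push_neg; linarith) (by push_neg; linarith)
      (not_le.2 h3) h4]
    simp only [hv]
    field_simp
    ring
  · rw [gg5 hp1 hp2 hq1 hq2 h0 h2 (not_le.2 hy4), gg5 hq1 hq2 hp1 hp2 h0 h2 (not_le.2 hy4)]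
end main

section main2
variable (h0 : 0 < δ) (h2 : nn < c) (hp1 : δ ≤ p) (hp2 : p ≤ nn) (hq1 : δ ≤ q) (hq2 : q ≤ nn)
include h0 h2 hp1 hp2 hq1 hq2

lemma gg_self : gg δ nn c p p y = y := by
  have hp0 : 0 < p := lt_of_lt_of_le h0 hp1
  have hpc : p < c := lt_of_le_of_lt hp2 h2
  have hcp : (0:ℝ) < c - p := by linarith
  rcases le_or_gt y (-c) with hy1 | hy1
  · exact gg1 hy1
  rcases le_or_gt y (-p) with hy2 | hy2
  · rw [gg2 hp1 hp2 hp1 hp2 (not_le.2 hy1) hy2, div_self (ne_of_gt hcp)]; ring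
  rcases le_or_gt y p with hy3 | hy3
  · rw [gg3 hp1 hp2 hp1 hp2 (not_le.2 hy1) (not_le.2 hy2) hy3, div_self (ne_of_gt hp0)]; ring
  rcases le_or_gt y c with hy4 | hy4
  · rw [gg4 hp1 hp2 hp1 hp2 (not_le.2 hy1) (not_le.2 hy2) (not_le.2 hy3) hy4,
      div_self (ne_of_gt hcp)]; ring
  · exact gg5 hp1 hp2 hp1 hp2 h0 h2 (not_le.2 hy4)

lemma gg_bounded (ha : -c ≤ y) (hb : y ≤ c) :
    -c ≤ gg δ nn c p q y ∧ gg δ nn c p q y ≤ c := by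
  have hp0 : 0 < p := lt_of_lt_of_le h0 hp1
  have hq0 : 0 < q := lt_of_lt_of_le h0 hq1
  have hpc : p < c := lt_of_le_of_lt hp2 h2
  have hqc : q < c := lt_of_le_of_lt hq2 h2
  have hcp : (0:ℝ) < c - p := by linarith
  have hcq : (0:ℝ) < c - q := by linarith
  have hβ : 0 < (c - q) / (c - p) := div_pos hcq hcp
  have hs : 0 < q / p := div_pos hq0 hp0
  rcases le_or_gt y (-c) with hy1 | hy1
  · rw [gg1 hy1]; constructor <;> linarith
  rcases le_or_gt y (-p) with hy2 | hy2
  · rw [gg2 hp1 hp2 hq1 hq2 (not_le.2 hy1) hy2]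
    have h3 : 0 < (c - q) / (c - p) * (y + c) := mul_pos hβ (by linarith)
    have h4 : (c - q) / (c - p) * (y + c) ≤ (c - q) / (c - p) * (c - p) :=
      mul_le_mul_of_nonneg_left (by linarith) hβ.le
    rw [div_mul_cancel₀ _ (ne_of_gt hcp)] at h4
    constructor <;> linarith
  rcases le_or_gt y p with hy3 | hy3
  · rw [gg3 hp1 hp2 hq1 hq2 (not_le.2 hy1) (not_le.2 hy2) hy3]
    have h3 := mul_le_mul_of_nonneg_left hy3 hs.le
    have h4 := mul_le_mul_of_nonneg_left (show -p ≤ y by linarith) hs.le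
    rw [div_mul_cancel₀ _ (ne_of_gt hp0)] at h3
    rw [mul_neg, div_mul_cancel₀ _ (ne_of_gt hp0)] at h4
    constructor <;> linarith
  · rw [gg4 hp1 hp2 hq1 hq2 (not_le.2 hy1) (not_le.2 hy2) (not_le.2 hy3) hb]
    have h3 : (c - q) / (c - p) * (y - c) ≤ 0 :=
      mul_nonpos_of_nonneg_of_nonpos hβ.le (by linarith)
    have h4 : (c - q) / (c - p) * (p - c) ≤ (c - q) / (c - p) * (y - c) :=
      mul_le_mul_of_nonneg_left (by linarith) hβ.le
    have e1 : (c - q) / (c - p) * (p - c) = -(c - q) := by field_simp; ring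
    constructor <;> linarith
end main2

section main3
variable (h0 : 0 < δ) (h1 : δ ≤ nn) (h2 : nn < c) (hq1 : δ ≤ q) (hq2 : q ≤ nn)
include h0 h1 h2 hq1 hq2

lemma gg_abs : |gg δ nn c nn q y| ≤ |y| := by
  have hq0 : 0 < q := lt_of_lt_of_le h0 hq1
  have hn0 : 0 < nn := lt_of_lt_of_le h0 h1
  have hnc : nn < c := h2
  have hcp : (0:ℝ) < c - nn := by linarith
  have hqc : q < c := lt_of_le_of_lt hq2 h2
  have hcq : (0:ℝ) < c - q := by linarith
  have hβ : 0 < (c - q) / (c - nn) := div_pos hcq hcp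
  have hβ1 : 1 ≤ (c - q) / (c - nn) := (one_le_div hcp).2 (by linarith)
  have hs1 : q / nn ≤ 1 := (div_le_one hn0).2 hq2
  have hs : 0 < q / nn := div_pos hq0 hn0
  have hnn := le_refl nn
  rcases le_or_gt y (-c) with hy1 | hy1
  · rw [gg1 hy1]
  rcases le_or_gt y (-nn) with hy2 | hy2
  · rw [gg2 h1 hnn hq1 hq2 (not_le.2 hy1) hy2]
    have h4 : (c - q) / (c - nn) * (y + c) ≤ (c - q) / (c - nn) * (c - nn) :=
      mul_le_mul_of_nonneg_left (by linarith) hβ.le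
    rw [div_mul_cancel₀ _ (ne_of_gt hcp)] at h4
    have h5 : y + c ≤ (c - q) / (c - nn) * (y + c) := le_mul_of_one_le_left (by linarith) hβ1
    rw [abs_of_nonpos (by linarith), abs_of_nonpos (by linarith)]
    linarith
  rcases le_or_gt y nn with hy3 | hy3
  · rw [gg3 h1 hnn hq1 hq2 (not_le.2 hy1) (not_le.2 hy2) hy3, abs_mul,
      abs_of_nonneg hs.le]
    exact mul_le_of_le_one_left (abs_nonneg y) hs1
  rcases le_or_gt y c with hy4 | hy4
  · rw [gg4 h1 hnn hq1 hq2 (not_le.2 hy1) (not_le.2 hy2) (not_le.2 hy3) hy4]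
    have h3 : (c - q) / (c - nn) * (y - c) ≤ 0 :=
      mul_nonpos_of_nonneg_of_nonpos hβ.le (by linarith)
    have h4 : (c - q) / (c - nn) * (nn - c) ≤ (c - q) / (c - nn) * (y - c) :=
      mul_le_mul_of_nonneg_left (by linarith) hβ.le
    have e1 : (c - q) / (c - nn) * (nn - c) = -(c - q) := by field_simp; ring
    have h5 : (c - q) / (c - nn) * (y - c) ≤ y - c := by
      nlinarith [mul_le_mul_of_nonneg_right hβ1 (show (0:ℝ) ≤ c - y by linarith)]
    rw [abs_of_nonneg (by linarith), abs_of_nonneg (by linarith)]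
    linarith
  · rw [gg5 h1 hnn hq1 hq2 h0 h2 (not_le.2 hy4)]

lemma gg_small (ha : -nn ≤ y) (hb : y ≤ nn) : |gg δ nn c nn q y| ≤ q := by
  have hq0 : 0 < q := lt_of_lt_of_le h0 hq1
  have hn0 : 0 < nn := lt_of_lt_of_le h0 h1
  have hcp : (0:ℝ) < c - nn := by linarith
  have hs : 0 < q / nn := div_pos hq0 hn0
  have hnn := le_refl nn
  rcases le_or_gt y (-nn) with hy2 | hy2
  · have hy : y = -nn := le_antisymm hy2 ha
    rw [gg2 h1 hnn hq1 hq2 (by push_neg; linarith) hy2, hy]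
    have : -nn + c = c - nn := by ring
    rw [this, div_mul_cancel₀ _ (ne_of_gt hcp)]
    rw [show c - q - c = -q by ring, abs_neg, abs_of_nonneg hq0.le]
  · rw [gg3 h1 hnn hq1 hq2 (by push_neg; linarith) (not_le.2 hy2) hb, abs_mul,
      abs_of_nonneg hs.le]
    have : |y| ≤ nn := abs_le.2 ⟨ha, hb⟩
    calc q / nn * |y| ≤ q / nn * nn := mul_le_mul_of_nonneg_left this hs.le
    _ = q := div_mul_cancel₀ _ (ne_of_gt hn0)
end main3

lemma cl_mem (h1 : δ ≤ nn) : δ ≤ cl δ nn p ∧ cl δ nn p ≤ nn :=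
  ⟨le_max_left _ _, cl_le h1⟩

lemma gg_cl {y : ℝ} (h1 : δ ≤ nn) :
    gg δ nn c p q y = gg δ nn c (cl δ nn p) (cl δ nn q) y := by
  unfold gg
  rw [cl_eq (cl_mem (p := p) h1).1 (cl_mem (p := p) h1).2,
    cl_eq (cl_mem (p := q) h1).1 (cl_mem (p := q) h1).2]

/-- clamp an extended real into `[-c,c]` and convert to a real number -/
noncomputable def clR (c : ℝ) (y : EReal) : ℝ :=
  (max ((-c : ℝ) : EReal) (min ((c : ℝ) : EReal) y)).toReal

lemma clR_cont : Continuous (clR c) := by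
  have h1 : Continuous fun y : EReal => max ((-c : ℝ) : EReal) (min ((c : ℝ) : EReal) y) :=
    continuous_const.max (continuous_const.min continuous_id)
  refine EReal.continuousOn_toReal.comp_continuous h1 fun y => ?_
  have hb' : ((-c : ℝ) : EReal) ≤ max ((-c : ℝ) : EReal) (min ((c : ℝ) : EReal) y) :=
    le_max_left _ _
  have ht : max ((-c : ℝ) : EReal) (min ((c : ℝ) : EReal) y)
      ≤ max ((c : ℝ) : EReal) ((-c : ℝ) : EReal) :=
    max_le (le_max_right _ _) (le_trans (min_le_left _ _) (le_max_left _ _))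
  have hlt : max ((c : ℝ) : EReal) ((-c : ℝ) : EReal) < ⊤ :=
    max_lt (EReal.coe_lt_top c) (EReal.coe_lt_top (-c))
  simp only [mem_compl_iff, mem_insert_iff, mem_singleton_iff, not_or]
  constructor
  · intro h
    rw [h] at hb'
    exact absurd hb' (by simp)
  · intro h
    rw [h] at ht
    exact absurd ht (not_le.2 hlt)

section ereal
variable {x : EReal}

lemma clR_coe_of_mem (ha : ((-c : ℝ) : EReal) ≤ x) (hb : x ≤ ((c : ℝ) : EReal)) :
    ((clR c x : ℝ) : EReal) = x ∧ -c ≤ clR c x ∧ clR c x ≤ c := by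
  have hne1 : x ≠ ⊤ := fun h => by rw [h] at hb; exact absurd hb (by simp)
  have hne2 : x ≠ ⊥ := fun h => by rw [h] at ha; exact absurd ha (by simp)
  have he : max ((-c : ℝ) : EReal) (min ((c : ℝ) : EReal) x) = x := by
    rw [min_eq_right hb, max_eq_right ha]
  unfold clR
  rw [he]
  refine ⟨EReal.coe_toReal hne1 hne2, ?_, ?_⟩
  · rw [← EReal.coe_le_coe_iff, EReal.coe_toReal hne1 hne2]; exact ha
  · rw [← EReal.coe_le_coe_iff, EReal.coe_toReal hne1 hne2]; exact hb

/-- The basic one-coordinate shrinking homeomorphism of `EReal`. -/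
noncomputable def eF (δ nn c p q : ℝ) (x : EReal) : EReal :=
  if x ≤ ((c : ℝ) : EReal) then
    (if ((-c : ℝ) : EReal) ≤ x then ((gg δ nn c p q (clR c x) : ℝ) : EReal) else x)
  else x

lemma gg_atc (h0 : 0 < δ) (h1 : δ ≤ nn) (h2 : nn < c) :
    gg δ nn c p q c = c := by
  rw [gg_cl h1]
  have hmp := cl_mem (p := p) (δ := δ) h1
  have hmq := cl_mem (p := q) (δ := δ) h1
  have hp0 : 0 < cl δ nn p := cl_pos h0
  have hpc : cl δ nn p < c := cl_lt h1 h2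
  have hc0 : 0 < c := by linarith
  rw [gg4 hmp.1 hmp.2 hmq.1 hmq.2 (by push_neg; linarith) (by push_neg; linarith)
    (by push_neg; linarith) le_rfl]
  ring

lemma eF_cont (h0 : 0 < δ) (h1 : δ ≤ nn) (h2 : nn < c) :
    Continuous fun z : ℝ × ℝ × EReal => eF δ nn c z.1 z.2.1 z.2.2 := by
  have hc0 : (0:ℝ) < c := by linarith
  have hx : Continuous fun z : ℝ × ℝ × EReal => z.2.2 := continuous_snd.comp continuous_snd
  have hH : Continuous fun z : ℝ × ℝ × EReal =>
      ((gg δ nn c z.1 z.2.1 (clR c z.2.2) : ℝ) : EReal) := by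
    refine continuous_coe_real_ereal.comp ?_
    exact (gg_cont h0 h1 h2).comp
      (continuous_fst.prodMk ((continuous_fst.comp continuous_snd).prodMk
        (clR_cont.comp (continuous_snd.comp continuous_snd))))
  have hinner : Continuous fun z : ℝ × ℝ × EReal =>
      if ((-c : ℝ) : EReal) ≤ z.2.2 then ((gg δ nn c z.1 z.2.1 (clR c z.2.2) : ℝ) : EReal)
      else z.2.2 := by
    refine Continuous.if_le hH hx continuous_const hx (fun z hz => ?_)
    have ha : ((-c : ℝ) : EReal) ≤ z.2.2 := hz.le
    have hb : z.2.2 ≤ ((c : ℝ) : EReal) := by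
      rw [← hz]; exact EReal.coe_le_coe_iff.2 (by linarith)
    obtain ⟨hcoe, hge, hle⟩ := clR_coe_of_mem ha hb
    have hval : clR c z.2.2 = -c := by
      have : ((clR c z.2.2 : ℝ) : EReal) = ((-c : ℝ) : EReal) := by rw [hcoe, ← hz]
      exact_mod_cast this
    rw [hval, gg1 le_rfl, ← hz]
  unfold eF
  refine Continuous.if_le hinner hx hx continuous_const (fun z hz => ?_)
  have hb : z.2.2 ≤ ((c : ℝ) : EReal) := hz.le
  have ha : ((-c : ℝ) : EReal) ≤ z.2.2 := by
    rw [hz]; exact EReal.coe_le_coe_iff.2 (by linarith)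
  rw [if_pos ha]
  obtain ⟨hcoe, hge, hle⟩ := clR_coe_of_mem ha hb
  have hval : clR c z.2.2 = c := by
    have : ((clR c z.2.2 : ℝ) : EReal) = ((c : ℝ) : EReal) := by rw [hcoe, hz]
    exact_mod_cast this
  rw [hval, gg_atc h0 h1 h2, hz]

section efprops
variable (h0 : 0 < δ) (h2 : nn < c) (hp1 : δ ≤ p) (hp2 : p ≤ nn) (hq1 : δ ≤ q) (hq2 : q ≤ nn)
include h0 h2 hp1 hp2 hq1 hq2

lemma eF_inv : eF δ nn c q p (eF δ nn c p q x) = x := by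
  unfold eF
  by_cases hA : x ≤ ((c : ℝ) : EReal)
  · by_cases hB : ((-c : ℝ) : EReal) ≤ x
    · rw [if_pos hA, if_pos hB]
      obtain ⟨hcoe, hge, hle⟩ := clR_coe_of_mem hB hA
      obtain ⟨hb1, hb2⟩ := gg_bounded h0 h2 hp1 hp2 hq1 hq2 hge hle
      have hA2 : ((gg δ nn c p q (clR c x) : ℝ) : EReal) ≤ ((c : ℝ) : EReal) :=
        EReal.coe_le_coe_iff.2 hb2
      have hB2 : ((-c : ℝ) : EReal) ≤ ((gg δ nn c p q (clR c x) : ℝ) : EReal) :=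
        EReal.coe_le_coe_iff.2 hb1
      rw [if_pos hA2, if_pos hB2]
      have hclr : clR c ((gg δ nn c p q (clR c x) : ℝ) : EReal) = gg δ nn c p q (clR c x) := by
        have := (clR_coe_of_mem hB2 hA2).1
        exact_mod_cast this
      rw [hclr, gg_inv h0 h2 hp1 hp2 hq1 hq2, hcoe]
    · rw [if_pos hA, if_neg hB, if_pos hA, if_neg hB]
  · rw [if_neg hA, if_neg hA]

lemma eF_self : eF δ nn c p p x = x := by
  unfold eF
  split_ifs with hA hB
  · obtain ⟨hcoe, hge, hle⟩ := clR_coe_of_mem hB hA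
    rw [gg_self h0 h2 hp1 hp2 hq1 hq2, hcoe]
  · rfl
  · rfl

lemma eF_abs : (eF δ nn c nn q x).abs ≤ x.abs := by
  have h1 : δ ≤ nn := le_trans hp1 hp2
  unfold eF
  split_ifs with hA hB
  · obtain ⟨hcoe, hge, hle⟩ := clR_coe_of_mem hB hA
    rw [EReal.abs_def]
    conv_rhs => rw [← hcoe, EReal.abs_def]
    exact ENNReal.ofReal_le_ofReal (gg_abs h0 h1 h2 hq1 hq2)
  · exact le_rfl
  · exact le_rfl

lemma eF_small (ha : ((-nn : ℝ) : EReal) ≤ x) (hb : x ≤ ((nn : ℝ) : EReal)) :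
    ∃ r : ℝ, eF δ nn c nn q x = (r : EReal) ∧ |r| ≤ q := by
  have h1 : δ ≤ nn := le_trans hp1 hp2
  have hA : x ≤ ((c : ℝ) : EReal) := le_trans hb (EReal.coe_le_coe_iff.2 (by linarith))
  have hB : ((-c : ℝ) : EReal) ≤ x := le_trans (EReal.coe_le_coe_iff.2 (by linarith)) ha
  unfold eF
  rw [if_pos hA, if_pos hB]
  obtain ⟨hcoe, hge, hle⟩ := clR_coe_of_mem hB hA
  have hgen : -nn ≤ clR c x := by
    have : ((-nn : ℝ) : EReal) ≤ ((clR c x : ℝ) : EReal) := by rw [hcoe]; exact ha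
    exact_mod_cast this
  have hlen : clR c x ≤ nn := by
    have : ((clR c x : ℝ) : EReal) ≤ ((nn : ℝ) : EReal) := by rw [hcoe]; exact hb
    exact_mod_cast this
  exact ⟨_, rfl, gg_small h0 h1 h2 hq1 hq2 hgen hlen⟩

end efprops

lemma eF_outside (h : ¬ ((-c : ℝ) : EReal) ≤ x ∨ ¬ x ≤ ((c : ℝ) : EReal)) :
    eF δ nn c p q x = x := by
  unfold eF
  split_ifs with hA hB
  · exfalso; tauto
  · rfl
  · rfl

lemma eF_top_iff : eF δ nn c p q x = ⊤ ↔ x = ⊤ := by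
  constructor
  · intro h
    unfold eF at h
    split_ifs at h with hA hB
    · exact absurd h (EReal.coe_ne_top _)
    · exact h
    · exact h
  · rintro rfl
    exact eF_outside (Or.inr (not_le.2 (EReal.coe_lt_top c)))

lemma eF_bot_iff : eF δ nn c p q x = ⊥ ↔ x = ⊥ := by
  constructor
  · intro h
    unfold eF at h
    split_ifs at h with hA hB
    · exact absurd h (EReal.coe_ne_bot _)
    · exact h
    · exact h
  · rintro rfl
    exact eF_outside (Or.inl (not_le.2 (EReal.bot_lt_coe _)))


end ereal
section qlevel

/-- bump function on `EReal`: `1` on `[-nn,nn]`, `0` outside `(-c,c)` -/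
noncomputable def bumpF (nn c : ℝ) (x : EReal) : ℝ :=
  max 0 (min 1 ((c - |clR c x|) / (c - nn)))

lemma bumpF_cont : Continuous (bumpF nn c) := by
  unfold bumpF
  exact continuous_const.max (continuous_const.min
    ((continuous_const.sub (_root_.continuous_abs.comp clR_cont)).div_const _))

lemma bumpF_mem : 0 ≤ bumpF nn c x ∧ bumpF nn c x ≤ 1 := by
  unfold bumpF
  refine ⟨le_max_left _ _, max_le (by norm_num) (min_le_left _ _)⟩

lemma bumpF_one (h0 : 0 < δ) (h1 : δ ≤ nn) (h2 : nn < c)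
    (ha : ((-nn : ℝ) : EReal) ≤ x) (hb : x ≤ ((nn : ℝ) : EReal)) : bumpF nn c x = 1 := by
  have hn0 : 0 < nn := lt_of_lt_of_le h0 h1
  have hA : x ≤ ((c : ℝ) : EReal) := le_trans hb (EReal.coe_le_coe_iff.2 (by linarith))
  have hB : ((-c : ℝ) : EReal) ≤ x := le_trans (EReal.coe_le_coe_iff.2 (by linarith)) ha
  obtain ⟨hcoe, hge, hle⟩ := clR_coe_of_mem hB hA
  have hgen : -nn ≤ clR c x := by
    have : ((-nn : ℝ) : EReal) ≤ ((clR c x : ℝ) : EReal) := by rw [hcoe]; exact ha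
    exact_mod_cast this
  have hlen : clR c x ≤ nn := by
    have : ((clR c x : ℝ) : EReal) ≤ ((nn : ℝ) : EReal) := by rw [hcoe]; exact hb
    exact_mod_cast this
  have habs : |clR c x| ≤ nn := abs_le.2 ⟨hgen, hlen⟩
  have h3 : (1:ℝ) ≤ (c - |clR c x|) / (c - nn) := (one_le_div (by linarith)).2 (by linarith)
  unfold bumpF
  rw [min_eq_left h3, max_eq_right (by norm_num)]

lemma bumpF_zero (h0 : 0 < δ) (h1 : δ ≤ nn) (h2 : nn < c)
    (h : ¬ ((-c : ℝ) : EReal) ≤ x ∨ ¬ x ≤ ((c : ℝ) : EReal)) : bumpF nn c x = 0 := by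
  have hc0 : (0:ℝ) < c := by linarith
  have habs : |clR c x| = c := by
    rcases h with h | h
    · have hx : x < ((-c : ℝ) : EReal) := not_le.1 h
      have h4 : min ((c : ℝ) : EReal) x = x :=
        min_eq_right (le_trans hx.le (EReal.coe_le_coe_iff.2 (by linarith)))
      have h5 : max ((-c : ℝ) : EReal) (min ((c : ℝ) : EReal) x) = ((-c : ℝ) : EReal) := by
        rw [h4]; exact max_eq_left hx.le
      unfold clR
      rw [h5, EReal.toReal_coe, abs_neg, abs_of_pos hc0]
    · have hx : ((c : ℝ) : EReal) < x := not_le.1 h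
      have h4 : min ((c : ℝ) : EReal) x = ((c : ℝ) : EReal) := min_eq_left hx.le
      have h5 : max ((-c : ℝ) : EReal) (min ((c : ℝ) : EReal) x) = ((c : ℝ) : EReal) := by
        rw [h4]; exact max_eq_right (EReal.coe_le_coe_iff.2 (by linarith))
      unfold clR
      rw [h5, EReal.toReal_coe, abs_of_pos hc0]
  unfold bumpF
  rw [habs, sub_self, zero_div, min_eq_right (by norm_num)]
  simp

/-- the partial-shrink parameter for coordinate `k` -/
noncomputable def qq (nn c : ℝ) (d : ℕ → ℝ) (m k : ℕ) (x : ℕ → EReal) : ℝ :=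
  nn + (∏ j ∈ (Finset.range m).erase k, bumpF nn c (x j)) * (d k - nn)

lemma qq_cont : Continuous (qq nn c d m k) := by
  unfold qq
  refine continuous_const.add (Continuous.mul ?_ continuous_const)
  exact continuous_finset_prod _ (fun j _ => bumpF_cont.comp (continuous_apply j))

lemma prod_bumpF_mem (x : ℕ → EReal) :
    0 ≤ (∏ j ∈ (Finset.range m).erase k, bumpF nn c (x j)) ∧
    (∏ j ∈ (Finset.range m).erase k, bumpF nn c (x j)) ≤ 1 := by
  constructor
  · exact Finset.prod_nonneg (fun j _ => (bumpF_mem).1)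
  · exact Finset.prod_le_one (fun j _ => (bumpF_mem).1) (fun j _ => (bumpF_mem).2)

lemma qq_mem (hd1 : δ ≤ d k) (hd2 : d k ≤ nn) {x : ℕ → EReal} :
    δ ≤ qq nn c d m k x ∧ qq nn c d m k x ≤ nn := by
  obtain ⟨hT0, hT1⟩ := prod_bumpF_mem (nn := nn) (c := c) (m := m) (k := k) x
  set T := ∏ j ∈ (Finset.range m).erase k, bumpF nn c (x j)
  unfold qq
  constructor
  · nlinarith
  · nlinarith

lemma qq_update {x : ℕ → EReal} {v : EReal} :
    qq nn c d m k (Function.update x k v) = qq nn c d m k x := by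
  unfold qq
  congr 2
  refine Finset.prod_congr rfl (fun j hj => ?_)
  rw [Function.update_of_ne (Finset.ne_of_mem_erase hj)]

variable (h0 : 0 < δ) (h1 : δ ≤ nn) (h2 : nn < c)

/-- the one-coordinate partial-shrink homeomorphism of the Hilbert cube -/
noncomputable def step (δ nn c : ℝ) (d : ℕ → ℝ) (m k : ℕ)
    (h0 : 0 < δ) (h1 : δ ≤ nn) (h2 : nn < c) (hd : ∀ j, δ ≤ d j ∧ d j ≤ nn) :
    (ℕ → EReal) ≃ₜ (ℕ → EReal) where
  toFun x := Function.update x k (eF δ nn c nn (qq nn c d m k x) (x k))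
  invFun x := Function.update x k (eF δ nn c (qq nn c d m k x) nn (x k))
  left_inv x := by
    have hq := qq_mem (δ := δ) (nn := nn) (c := c) (m := m) (hd k).1 (hd k).2 (x := x)
    dsimp only
    rw [qq_update, Function.update_self, Function.update_idem,
      eF_inv h0 h2 h1 le_rfl hq.1 hq.2, Function.update_eq_self]
  right_inv x := by
    have hq := qq_mem (δ := δ) (nn := nn) (c := c) (m := m) (hd k).1 (hd k).2 (x := x)
    dsimp only
    rw [qq_update, Function.update_self, Function.update_idem,
      eF_inv h0 h2 hq.1 hq.2 h1 le_rfl, Function.update_eq_self]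
  continuous_toFun := by
    apply continuous_pi
    intro j
    by_cases hj : j = k
    · subst hj
      simp only [Function.update_self]
      exact (eF_cont h0 h1 h2).comp
        (continuous_const.prodMk (qq_cont.prodMk (continuous_apply j)))
    · simp only [Function.update_of_ne hj]
      exact continuous_apply j
  continuous_invFun := by
    apply continuous_pi
    intro j
    by_cases hj : j = k
    · subst hj
      simp only [Function.update_self]
      exact (eF_cont h0 h1 h2).comp
        (qq_cont.prodMk (continuous_const.prodMk (continuous_apply j)))
    · simp only [Function.update_of_ne hj]
      exact continuous_apply j

end qlevel

/-- composition of the one-coordinate shrinks for coordinates `0, …, k-1` -/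
noncomputable def bigH (δ nn c : ℝ) (d : ℕ → ℝ) (m : ℕ)
    (h0 : 0 < δ) (h1 : δ ≤ nn) (h2 : nn < c) (hd : ∀ j, δ ≤ d j ∧ d j ≤ nn) :
    ℕ → ((ℕ → EReal) ≃ₜ (ℕ → EReal))
  | 0 => Homeomorph.refl _
  | (k+1) => (bigH δ nn c d m h0 h1 h2 hd k).trans (step δ nn c d m k h0 h1 h2 hd)

section bigh
variable {δ nn c : ℝ} {d : ℕ → ℝ} {m : ℕ}
  (h0 : 0 < δ) (h1 : δ ≤ nn) (h2 : nn < c) (hd : ∀ j, δ ≤ d j ∧ d j ≤ nn)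

lemma bigH_succ (k : ℕ) (x : ℕ → EReal) :
    bigH δ nn c d m h0 h1 h2 hd (k+1) x =
      Function.update (bigH δ nn c d m h0 h1 h2 hd k x) k
        (eF δ nn c nn (qq nn c d m k (bigH δ nn c d m h0 h1 h2 hd k x))
          ((bigH δ nn c d m h0 h1 h2 hd k x) k)) := rfl

include h0 h1 h2 hd

lemma bigH_apply_ge : ∀ k (x : ℕ → EReal) j, k ≤ j →
    (bigH δ nn c d m h0 h1 h2 hd k x) j = x j := by
  intro k
  induction k with
  | zero => intro x j _; rfl
  | succ k ih =>
    intro x j hj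
    rw [bigH_succ, Function.update_of_ne (by omega : j ≠ k)]
    exact ih x j (by omega)

lemma bigH_abs : ∀ k (x : ℕ → EReal) j,
    ((bigH δ nn c d m h0 h1 h2 hd k x) j).abs ≤ ((x j)).abs := by
  intro k
  induction k with
  | zero => intro x j; exact le_rfl
  | succ k ih =>
    intro x j
    rw [bigH_succ]
    set y := bigH δ nn c d m h0 h1 h2 hd k x with hy
    by_cases hjk : j = k
    · subst hjk
      rw [Function.update_self]
      have hq := qq_mem (δ := δ) (nn := nn) (c := c) (m := m) (hd j).1 (hd j).2 (x := y)
      exact le_trans (eF_abs h0 h2 h1 le_rfl hq.1 hq.2) (ih x j)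
    · rw [Function.update_of_ne hjk]
      exact ih x j

lemma bigH_top_iff : ∀ k (x : ℕ → EReal) j,
    ((bigH δ nn c d m h0 h1 h2 hd k x) j = ⊤ ↔ x j = ⊤) ∧
    ((bigH δ nn c d m h0 h1 h2 hd k x) j = ⊥ ↔ x j = ⊥) := by
  intro k
  induction k with
  | zero => intro x j; exact ⟨Iff.rfl, Iff.rfl⟩
  | succ k ih =>
    intro x j
    rw [bigH_succ]
    set y := bigH δ nn c d m h0 h1 h2 hd k x with hy
    by_cases hjk : j = k
    · subst hjk
      rw [Function.update_self]
      exact ⟨(eF_top_iff).trans (ih x j).1, (eF_bot_iff).trans (ih x j).2⟩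
    · rw [Function.update_of_ne hjk]
      exact ih x j

lemma bigH_outside {x : ℕ → EReal}
    (hx : ∃ i, i < m ∧ (¬ ((-c : ℝ) : EReal) ≤ x i ∨ ¬ x i ≤ ((c : ℝ) : EReal))) :
    ∀ k, bigH δ nn c d m h0 h1 h2 hd k x = x := by
  obtain ⟨i, him, hout⟩ := hx
  intro k
  induction k with
  | zero => rfl
  | succ k ih =>
    funext j
    rw [bigH_succ, ih]
    by_cases hjk : j = k
    · subst hjk
      rw [Function.update_self]
      by_cases hik : i = j
      · subst hik
        exact eF_outside hout
      · have hqq : qq nn c d m j x = nn := by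
          unfold qq
          rw [Finset.prod_eq_zero (Finset.mem_erase.2 ⟨hik, Finset.mem_range.2 him⟩)
            (bumpF_zero h0 h1 h2 hout)]
          ring
        rw [hqq, eF_self h0 h2 h1 le_rfl h1 le_rfl]
    · rw [Function.update_of_ne hjk]

lemma bigH_cube {x : ℕ → EReal}
    (hx : ∀ i, ((-nn : ℝ) : EReal) ≤ x i ∧ x i ≤ ((nn : ℝ) : EReal)) :
    ∀ k j, j < k → ∃ r : ℝ, (bigH δ nn c d m h0 h1 h2 hd k x) j = (r : EReal) ∧ |r| ≤ d j := by
  intro k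
  induction k with
  | zero => intro j hj; omega
  | succ k ih =>
    intro j hj
    rw [bigH_succ]
    set y := bigH δ nn c d m h0 h1 h2 hd k x with hy
    by_cases hjk : j = k
    · subst hjk
      rw [Function.update_self]
      have hyj : y j = x j := bigH_apply_ge h0 h1 h2 hd j x j le_rfl
      have hqq : qq nn c d m j y = d j := by
        unfold qq
        rw [Finset.prod_eq_one]
        · ring
        · intro i hi
          obtain ⟨hik, hirange⟩ := Finset.mem_erase.1 hi
          rcases lt_or_ge i j with hij | hij
          · obtain ⟨r, hr1, hr2⟩ := ih i hij
            have hrd : |r| ≤ nn := le_trans hr2 (hd i).2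
            obtain ⟨hra, hrb⟩ := abs_le.1 hrd
            refine bumpF_one h0 h1 h2 ?_ ?_
            · rw [hr1]; exact EReal.coe_le_coe_iff.2 (by linarith)
            · rw [hr1]; exact EReal.coe_le_coe_iff.2 (by linarith)
          · have hyi : y i = x i := bigH_apply_ge h0 h1 h2 hd j x i hij
            rw [hyi]
            exact bumpF_one h0 h1 h2 (hx i).1 (hx i).2
      rw [hqq, hyj]
      exact eF_small h0 h2 h1 le_rfl (hd j).1 (hd j).2 (hx j).1 (hx j).2
    · rw [Function.update_of_ne hjk]
      exact ih j (by omega)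

end bigh

end HCShrink

open HCShrink Function Set in
/-- In the Hilbert cube `Q = [−∞,∞]^ℕ`, for `n ≥ 1` and any neighborhoods `U` of
`[−n,n]^ℕ` and `V` of `0`, there is a homeomorphism `h : Q → Q` with `h = id` outside
`U`, `h(Q ∖ s) = Q ∖ s` (where `s = ℝ^ℕ ⊆ Q`), `h([−n,n]^ℕ) ⊆ V`, and
`|h(x)_i| ≤ |x_i|` for all `i`. -/
theorem hilbertCube_shrinking (n : ℕ) (hn : 1 ≤ n)
    (U V : Set (ℕ → EReal)) (hUo : IsOpen U) (hVo : IsOpen V)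
    (hU : {x : ℕ → EReal | ∀ i, x i ∈ Set.Icc ((-(n : ℝ) : ℝ) : EReal) ((n : ℝ) : EReal)} ⊆ U)
    (hV : (fun _ => (0 : EReal)) ∈ V) :
    ∃ h : (ℕ → EReal) ≃ₜ (ℕ → EReal),
      (∀ x, x ∉ U → h x = x) ∧
      (h '' {x | ∃ i, x i = ⊤ ∨ x i = ⊥} = {x | ∃ i, x i = ⊤ ∨ x i = ⊥}) ∧
      (h '' {x : ℕ → EReal | ∀ i, x i ∈ Set.Icc ((-(n : ℝ) : ℝ) : EReal) ((n : ℝ) : EReal)} ⊆ V) ∧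
      (∀ x i, (h x i).abs ≤ (x i).abs) := by
  have hn1 : (1:ℝ) ≤ (n:ℝ) := by exact_mod_cast hn
  have hn0 : (0:ℝ) < (n:ℝ) := by linarith
  -- Step 1: find `k₀` such that the `(n + 1/(k₀+1))`-cube in the first `k₀` coordinates
  -- is contained in `U`.
  set Z : ℕ → Set (ℕ → EReal) := fun k =>
    {x : ℕ → EReal | ∀ i < k,
      x i ∈ Set.Icc ((-(((n:ℝ) + 1/((k:ℝ)+1)) : ℝ) : EReal) : EReal)
        ((((n:ℝ) + 1/((k:ℝ)+1)) : ℝ) : EReal)} ∩ Uᶜ with hZ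
  have hZclosed : ∀ k, IsClosed (Z k) := by
    intro k
    refine IsClosed.inter ?_ hUo.isClosed_compl
    have he : {x : ℕ → EReal | ∀ i < k,
        x i ∈ Set.Icc ((-(((n:ℝ) + 1/((k:ℝ)+1)) : ℝ) : EReal) : EReal)
          ((((n:ℝ) + 1/((k:ℝ)+1)) : ℝ) : EReal)}
        = ⋂ (i : ℕ) (_ : i < k), (fun x : ℕ → EReal => x i) ⁻¹'
            Set.Icc ((-(((n:ℝ) + 1/((k:ℝ)+1)) : ℝ) : EReal) : EReal)
              ((((n:ℝ) + 1/((k:ℝ)+1)) : ℝ) : EReal) := by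
      ext x; simp [Set.mem_iInter]
    rw [he]
    exact isClosed_iInter fun i => isClosed_iInter fun _ =>
      isClosed_Icc.preimage (continuous_apply i)
  have hZdec : ∀ k, Z (k+1) ⊆ Z k := by
    intro k x hx
    refine ⟨fun i hi => ?_, hx.2⟩
    have h3 := hx.1 i (by omega)
    have hle : (1:ℝ)/((k:ℝ)+1+1) ≤ 1/((k:ℝ)+1) := by
      apply one_div_le_one_div_of_le <;> [positivity; linarith]
    obtain ⟨ha, hb⟩ := h3
    constructor
    · refine le_trans (EReal.coe_le_coe_iff.2 (by push_cast; linarith)) ha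
    · refine le_trans hb (EReal.coe_le_coe_iff.2 (by push_cast; linarith))
  have hZempty : (⋂ k, Z k) = ∅ := by
    rw [Set.eq_empty_iff_forall_notMem]
    intro x hx
    simp only [Set.mem_iInter] at hx
    have hxU : x ∈ Uᶜ := (hx 0).2
    apply hxU
    apply hU
    intro i
    have hbound : ∀ k, i < k →
        ((-(((n:ℝ) + 1/((k:ℝ)+1)) : ℝ) : EReal) : EReal) ≤ x i ∧
        x i ≤ ((((n:ℝ) + 1/((k:ℝ)+1)) : ℝ) : EReal) := fun k hk => (hx k).1 i hk
    constructor
    · by_contra hcon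
      push_neg at hcon
      obtain ⟨r, hr1, hr2⟩ := EReal.lt_iff_exists_real_btwn.1 hcon
      have hrn : r < -(n:ℝ) := by exact_mod_cast hr2
      obtain ⟨k, hk⟩ := exists_nat_gt (max (i:ℝ) (1/(-(n:ℝ) - r)))
      have hik : i < k := by exact_mod_cast lt_of_le_of_lt (le_max_left _ _) hk
      have hpos : (0:ℝ) < -(n:ℝ) - r := by linarith
      have hk2 : 1/(-(n:ℝ) - r) < (k:ℝ) := lt_of_le_of_lt (le_max_right _ _) hk
      have hk3 : 1/((k:ℝ)+1) < -(n:ℝ) - r := by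
        rw [div_lt_iff₀ (by positivity)]
        rw [div_lt_iff₀ hpos] at hk2
        nlinarith
      have hb := (hbound k hik).1
      have hcontr : ((r:ℝ) : EReal) < ((-(((n:ℝ) + 1/((k:ℝ)+1)) : ℝ) : ℝ) : EReal) :=
        EReal.coe_lt_coe_iff.2 (by linarith)
      exact absurd (hcontr.trans_le hb) (not_lt.2 hr1.le)
    · by_contra hcon
      push_neg at hcon
      obtain ⟨r, hr1, hr2⟩ := EReal.lt_iff_exists_real_btwn.1 hcon
      have hrn : (n:ℝ) < r := by exact_mod_cast hr1
      obtain ⟨k, hk⟩ := exists_nat_gt (max (i:ℝ) (1/(r - (n:ℝ))))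
      have hik : i < k := by exact_mod_cast lt_of_le_of_lt (le_max_left _ _) hk
      have hpos : (0:ℝ) < r - (n:ℝ) := by linarith
      have hk2 : 1/(r - (n:ℝ)) < (k:ℝ) := lt_of_le_of_lt (le_max_right _ _) hk
      have hk3 : 1/((k:ℝ)+1) < r - (n:ℝ) := by
        rw [div_lt_iff₀ (by positivity)]
        rw [div_lt_iff₀ hpos] at hk2
        nlinarith
      have hb := (hbound k hik).2
      have hcontr : ((((n:ℝ) + 1/((k:ℝ)+1)) : ℝ) : EReal) < ((r:ℝ) : EReal) :=
        EReal.coe_lt_coe_iff.2 (by linarith)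
      exact absurd (hb.trans_lt hcontr) (not_lt.2 hr2.le)
  have hex : ∃ k₀, Z k₀ = ∅ := by
    by_contra hcc
    push_neg at hcc
    have hne : ∀ k, (Z k).Nonempty := hcc
    have hnonempty := IsCompact.nonempty_iInter_of_sequence_nonempty_isCompact_isClosed
      Z hZdec hne ((hZclosed 0).isCompact) hZclosed
    rw [hZempty] at hnonempty
    exact Set.not_nonempty_empty hnonempty
  obtain ⟨k₀, hk₀⟩ := hex
  set c : ℝ := (n:ℝ) + 1/((k₀:ℝ)+1) with hc
  have h2 : (n:ℝ) < c := by
    have hpos : (0:ℝ) < 1/((k₀:ℝ)+1) := by positivity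
    rw [hc]; linarith
  -- data from the neighborhood `V` of `0`
  obtain ⟨I, u, hIu, hpi⟩ := (isOpen_pi_iff.1 hVo) _ hV
  have hEps : ∀ a : ℕ, ∃ ε : ℝ, 0 < ε ∧ (a ∈ I → ∀ r : ℝ, |r| < ε → (r : EReal) ∈ u a) := by
    intro a
    by_cases ha : a ∈ I
    · obtain ⟨hopen, hmem⟩ := hIu a ha
      have hpre : IsOpen (Real.toEReal ⁻¹' u a) := hopen.preimage continuous_coe_real_ereal
      have h0m : (0:ℝ) ∈ Real.toEReal ⁻¹' u a := by
        simp only [Set.mem_preimage]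
        exact_mod_cast hmem
      obtain ⟨ε, hε0, hball⟩ := Metric.isOpen_iff.1 hpre 0 h0m
      exact ⟨ε, hε0, fun _ r hr => hball (by simpa [Real.dist_eq] using hr)⟩
    · exact ⟨1, one_pos, fun h => absurd h ha⟩
  choose ε hε0 hεmem using hEps
  set d : ℕ → ℝ := fun a => if a ∈ I then min (n:ℝ) (ε a / 2) else (n:ℝ) with hd_def
  set S : Finset ℝ := insert (n:ℝ) (I.image fun a => ε a / 2) with hS
  have hSne : S.Nonempty := ⟨(n:ℝ), Finset.mem_insert_self _ _⟩
  set δ₀ : ℝ := S.min' hSne with hδ₀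
  have hδ₀n : δ₀ ≤ (n:ℝ) := Finset.min'_le _ _ (Finset.mem_insert_self _ _)
  have h0 : 0 < δ₀ := by
    have hmem := S.min'_mem hSne
    rcases Finset.mem_insert.1 hmem with h | h
    · rw [hδ₀, h]; exact hn0
    · obtain ⟨a, haI, hae⟩ := Finset.mem_image.1 h
      rw [hδ₀, ← hae]
      have := hε0 a
      linarith
  have hd : ∀ j, δ₀ ≤ d j ∧ d j ≤ (n:ℝ) := by
    intro j
    rw [hd_def]
    by_cases hj : j ∈ I
    · simp only [hj, if_true]
      refine ⟨le_min hδ₀n (Finset.min'_le _ _ ?_), min_le_left _ _⟩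
      exact Finset.mem_insert_of_mem (Finset.mem_image_of_mem _ hj)
    · simp only [hj, if_false]; exact ⟨hδ₀n, le_rfl⟩
  set m : ℕ := max k₀ (I.sup id + 1) with hm
  have hkm : k₀ ≤ m := le_max_left _ _
  have hIm : ∀ a ∈ I, a < m := fun a ha => lt_of_lt_of_le
    (Nat.lt_succ_of_le (Finset.le_sup (f := id) ha)) (le_max_right _ _)
  refine ⟨HCShrink.bigH δ₀ (n:ℝ) c d m h0 hδ₀n h2 hd m, ?_, ?_, ?_, ?_⟩
  · -- identity outside U
    intro x hxU
    by_cases hout : ∃ i, i < m ∧ (¬ ((-c : ℝ) : EReal) ≤ x i ∨ ¬ x i ≤ ((c : ℝ) : EReal))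
    · exact bigH_outside h0 hδ₀n h2 hd hout m
    · exfalso
      push_neg at hout
      have hxZ : x ∈ Z k₀ := by
        rw [hZ]
        refine ⟨fun i hi => ?_, hxU⟩
        have h5 := hout i (lt_of_lt_of_le hi hkm)
        rw [hc] at h5
        exact ⟨h5.1, h5.2⟩
      rw [hk₀] at hxZ
      exact hxZ
  · -- preservation of the pseudo-boundary
    ext y
    simp only [Set.mem_image, Set.mem_setOf_eq]
    constructor
    · rintro ⟨x, ⟨i, hi⟩, rfl⟩
      refine ⟨i, ?_⟩
      rcases hi with hi | hi
      · exact Or.inl (((bigH_top_iff (m := m) h0 hδ₀n h2 hd m x i).1).2 hi)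
      · exact Or.inr (((bigH_top_iff (m := m) h0 hδ₀n h2 hd m x i).2).2 hi)
    · rintro ⟨i, hi⟩
      refine ⟨(HCShrink.bigH δ₀ (n:ℝ) c d m h0 hδ₀n h2 hd m).symm y, ⟨i, ?_⟩,
        (HCShrink.bigH δ₀ (n:ℝ) c d m h0 hδ₀n h2 hd m).apply_symm_apply y⟩
      have h5 := bigH_top_iff (m := m) h0 hδ₀n h2 hd m
        ((HCShrink.bigH δ₀ (n:ℝ) c d m h0 hδ₀n h2 hd m).symm y) i
      rw [Homeomorph.apply_symm_apply] at h5
      rcases hi with hi | hi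
      · exact Or.inl (h5.1.1 hi)
      · exact Or.inr (h5.2.1 hi)
  · -- the cube is mapped into V
    rintro y ⟨x, hx, rfl⟩
    apply hpi
    intro a ha
    have haI : a ∈ I := ha
    have ham := hIm a haI
    have hcube : ∀ i, ((-(n:ℝ) : ℝ) : EReal) ≤ x i ∧ x i ≤ (((n:ℝ) : ℝ) : EReal) :=
      fun i => ⟨(hx i).1, (hx i).2⟩
    obtain ⟨r, hr1, hr2⟩ := bigH_cube (m := m) h0 hδ₀n h2 hd hcube m a ham
    have hgoal : (HCShrink.bigH δ₀ (n:ℝ) c d m h0 hδ₀n h2 hd m x) a = (r : EReal) := hr1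
    rw [hgoal]
    have hda : d a ≤ ε a / 2 := by
      rw [hd_def]
      simp only []
      rw [if_pos haI]
      exact min_le_right _ _
    refine hεmem a haI r ?_
    have := hε0 a
    linarith [le_trans hr2 hda]
  · -- coordinatewise absolute value decrease
    intro x i
    exact bigH_abs h0 hδ₀n h2 hd m x i
end

section
/- Let X be a completely metrizable separable space and X₂ ⊆ X a σ-compact subset. Then there exists a closed embedding f : X → ℝ^ℕ (product topology) such that f(X₂) ⊆ Σ, where Σ = {x : sup_n|x_n| < ∞} is the set of bounded sequences. -/
open Filter Set Topology Metric

/-- Every completely metrizable separable (i.e. Polish) space `X` admits a closed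
embedding `f : X → ℝ^ℕ` (product topology) such that a prescribed σ-compact subset
`X₂ ⊆ X` is mapped into the set `Σ` of bounded sequences. -/
theorem closedEmbedding_into_s_with_sigmaCompact_in_Sigma
    {X : Type*} [TopologicalSpace X] [PolishSpace X]
    (X₂ : Set X) (hX₂ : IsSigmaCompact X₂) :
    ∃ f : X → (ℕ → ℝ), Topology.IsClosedEmbedding f ∧
      f '' X₂ ⊆ {x : ℕ → ℝ | ∃ C : ℝ, ∀ n, |x n| ≤ C} := by
  classical
  rcases isEmpty_or_nonempty X with hX | hX
  · refine ⟨fun x => isEmptyElim x, ⟨⟨⟨?_⟩, fun x => isEmptyElim x⟩, ?_⟩, ?_⟩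
    · have hb : ∀ t : TopologicalSpace X, t = ⊥ :=
        fun t => eq_bot_of_singletons_open (fun x => isEmptyElim x)
      exact (hb _).trans (hb _).symm
    · rw [Set.range_eq_empty]; exact isClosed_empty
    · rintro y ⟨x, -, -⟩; exact isEmptyElim x
  letI := TopologicalSpace.upgradeIsCompletelyMetrizable X
  obtain ⟨u, hu⟩ := TopologicalSpace.exists_dense_seq X
  obtain ⟨K, hKc, hKU⟩ := hX₂
  set KK : ℕ → Set X := fun n => ⋃ i ∈ Finset.range (n + 1), K i with hKK
  have hKKc : ∀ n, IsCompact (KK n) :=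
    fun n => (Finset.range (n + 1)).isCompact_biUnion (fun i _ => hKc i)
  have hKKmono : ∀ m n, m ≤ n → KK m ⊆ KK n := by
    intro m n hmn
    exact Set.biUnion_subset_biUnion_left (fun i hi =>
      Finset.mem_range.2 (lt_of_lt_of_le (Finset.mem_range.1 hi) (by omega)))
  have hX₂KK : ∀ x ∈ X₂, ∃ M, x ∈ KK M := by
    intro x hx
    rw [← hKU] at hx
    obtain ⟨i, hi⟩ := Set.mem_iUnion.1 hx
    exact ⟨i, Set.mem_biUnion (Finset.mem_range.2 (by omega)) hi⟩
  letI : MetricSpace (ℕ → ℝ) := PiCountable.metricSpace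
  set h : X → ℕ → ℝ := fun x k => min (dist x (u k)) 1 with hh
  have hcont : Continuous h :=
    continuous_pi fun k => (continuous_id.dist continuous_const).min continuous_const
  have hsmall : ∀ (x : X) (r : ℝ), 0 < r → ∃ k, h x k < r := by
    intro x r hr
    obtain ⟨k, hk⟩ := Metric.denseRange_iff.1 hu x r hr
    exact ⟨k, lt_of_le_of_lt (min_le_left _ _) hk⟩
  have hnonneg : ∀ x k, 0 ≤ h x k := fun x k => le_min dist_nonneg zero_le_one
  have hle1 : ∀ x k, h x k ≤ 1 := fun x k => min_le_right _ _
  -- from a small value of `h x k` with `r ≤ 1` we get a small distance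
  have hstrip : ∀ (x : X) (k : ℕ) (r : ℝ), r ≤ 1 → h x k < r → dist x (u k) < r := by
    intro x k r hr1 hlt
    by_contra hge
    push_neg at hge
    have : min r 1 ≤ min (dist x (u k)) 1 := min_le_min hge le_rfl
    rw [min_eq_left hr1] at this
    exact absurd (lt_of_le_of_lt this hlt) (lt_irrefl r)
  set q : ℕ → ℝ := fun _ => 2 with hq
  set Cset : ℕ → Set (ℕ → ℝ) :=
    fun n => {q} ∪ (closure (Set.range h) ∩ {a | ∀ k, 1 / (n + 1 : ℝ) ≤ a k}) with hC
  have hCclosed : ∀ n, IsClosed (Cset n) := by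
    intro n
    refine isClosed_singleton.union (isClosed_closure.inter ?_)
    have : {a : ℕ → ℝ | ∀ k, 1 / (n + 1 : ℝ) ≤ a k} =
        ⋂ k, {a : ℕ → ℝ | 1 / (n + 1 : ℝ) ≤ a k} := by
      ext a; simp [Set.mem_iInter]
    rw [this]
    exact isClosed_iInter fun k => isClosed_le continuous_const (continuous_apply k)
  have hCne : ∀ n, (Cset n).Nonempty := fun n => ⟨q, Or.inl rfl⟩
  have hnotmem : ∀ n x, h x ∉ Cset n := by
    intro n x hx
    rcases hx with hx | ⟨-, hall⟩
    · have h1 : h x 0 ≤ 1 := hle1 x 0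
      rw [Set.mem_singleton_iff] at hx
      rw [hx] at h1
      norm_num [hq] at h1
    · obtain ⟨k, hk⟩ := hsmall x (1 / (n + 1 : ℝ)) (by positivity)
      exact absurd (hall k) (not_le.2 hk)
  have hDpos : ∀ n x, 0 < Metric.infDist (h x) (Cset n) :=
    fun n x => ((hCclosed n).notMem_iff_infDist_pos (hCne n)).1 (hnotmem n x)
  have hDcont : ∀ n, Continuous fun x => Metric.infDist (h x) (Cset n) :=
    fun n => (Metric.continuous_infDist_pt _).comp hcont
  have hδex : ∀ n, ∃ δ : ℝ, 0 < δ ∧ ∀ x ∈ KK n, δ ≤ Metric.infDist (h x) (Cset n) := by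
    intro n
    rcases (KK n).eq_empty_or_nonempty with he | hne
    · exact ⟨1, one_pos, by simp [he]⟩
    · obtain ⟨x₀, hx₀, hmin⟩ := (hKKc n).exists_isMinOn hne ((hDcont n).continuousOn)
      exact ⟨_, hDpos n x₀, fun x hx => hmin hx⟩
  choose δ hδpos hδle using hδex
  set g : ℕ → X → ℝ :=
    fun n x => max 0 (1 / Metric.infDist (h x) (Cset n) - 1 / δ n) with hg
  have hgcont : ∀ n, Continuous (g n) := fun n =>
    continuous_const.max
      (((continuous_const.div (hDcont n) fun x => (hDpos n x).ne').sub continuous_const))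
  have hgnonneg : ∀ n x, 0 ≤ g n x := fun n x => le_max_left _ _
  have hgzero : ∀ n x, x ∈ KK n → g n x = 0 := by
    intro n x hx
    have h1 : 1 / Metric.infDist (h x) (Cset n) ≤ 1 / δ n :=
      one_div_le_one_div_of_le (hδpos n) (hδle n x hx)
    exact max_eq_left (by linarith)
  set f : X → ℕ → ℝ := fun x m => if m % 2 = 0 then h x (m / 2) else g (m / 2) x with hf
  have hfeven : ∀ x k, f x (2 * k) = h x k := by
    intro x k
    have h1 : (2 * k) % 2 = 0 := by omega
    have h2 : (2 * k) / 2 = k := by omega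
    simp [hf, h1, h2]
  have hfodd : ∀ x n, f x (2 * n + 1) = g n x := by
    intro x n
    have h1 : ¬((2 * n + 1) % 2 = 0) := by omega
    have h2 : (2 * n + 1) / 2 = n := by omega
    simp [hf, h1, h2]
  have hfcont : Continuous f := by
    refine continuous_pi fun m => ?_
    simp only [hf]
    split_ifs with hm
    · exact (continuous_apply (m / 2)).comp hcont
    · exact hgcont (m / 2)
  have hinj : Function.Injective f := by
    intro x y hxy
    have hcoord : ∀ k, h x k = h y k := by
      intro k
      have := congrFun hxy (2 * k)
      rwa [hfeven, hfeven] at this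
    by_contra hne
    have hd : 0 < dist x y := dist_pos.2 hne
    set r : ℝ := min (dist x y / 4) (1 / 2) with hr
    have hrpos : 0 < r := lt_min (by linarith) (by norm_num)
    have hr1 : r ≤ 1 := le_trans (min_le_right _ _) (by norm_num)
    obtain ⟨k, hk⟩ := hsmall x r hrpos
    have hxk : dist x (u k) < r := hstrip x k r hr1 hk
    have hyk : dist y (u k) < r := hstrip y k r hr1 (by rw [← hcoord k]; exact hk)
    have : dist x y < 2 * r :=
      calc dist x y ≤ dist x (u k) + dist (u k) y := dist_triangle _ _ _
        _ = dist x (u k) + dist y (u k) := by rw [dist_comm (u k) y]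
        _ < r + r := add_lt_add hxk hyk
        _ = 2 * r := by ring
    have hrle : r ≤ dist x y / 4 := min_le_left _ _
    linarith
  have hclosed : IsClosedMap f := by
    intro C hCcl
    have hseq : IsSeqClosed (f '' C) := by
      intro zs z hzs hz
      choose x hxC hfx using hzs
      have hcoord : ∀ m, Tendsto (fun i => f (x i) m) atTop (𝓝 (z m)) := by
        intro m
        have := tendsto_pi_nhds.1 hz m
        simpa only [hfx] using this
      by_cases hbig : ∃ n : ℕ, ∀ k, 1 / (n + 1 : ℝ) ≤ z (2 * k)
      · exfalso
        obtain ⟨n, hn⟩ := hbig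
        set a : ℕ → ℝ := fun k => z (2 * k) with ha
        have hha : Tendsto (fun i => h (x i)) atTop (𝓝 a) :=
          tendsto_pi_nhds.2 fun k => by simpa only [hfeven] using hcoord (2 * k)
        have haC : a ∈ Cset n :=
          Or.inr ⟨mem_closure_of_tendsto hha
            (Eventually.of_forall fun i => Set.mem_range_self _), hn⟩
        have hD0 : Tendsto (fun i => Metric.infDist (h (x i)) (Cset n)) atTop (𝓝 0) := by
          have := ((Metric.continuous_infDist_pt (Cset n)).tendsto a).comp hha
          rwa [Metric.infDist_zero_of_mem haC] at this
        have hDtop : Tendsto (fun i => 1 / Metric.infDist (h (x i)) (Cset n)) atTop atTop := by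
          simp only [one_div]
          exact Filter.Tendsto.inv_tendsto_nhdsGT_zero
            (tendsto_nhdsWithin_of_tendsto_nhds_of_eventually_within _ hD0
              (Eventually.of_forall fun i => hDpos n (x i)))
        have h1 : Tendsto
            (fun i => 1 / Metric.infDist (h (x i)) (Cset n) - 1 / δ n) atTop atTop := by
          simpa [sub_eq_add_neg] using
            tendsto_atTop_add_const_right atTop (-(1 / δ n)) hDtop
        have hgtop : Tendsto (fun i => g n (x i)) atTop atTop :=
          tendsto_atTop_mono (fun i => le_max_right _ _) h1
        exact not_tendsto_nhds_of_tendsto_atTop hgtop _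
          (by simpa only [hfodd] using hcoord (2 * n + 1))
      · push_neg at hbig
        have hzsmall : ∀ r : ℝ, 0 < r → ∃ k, z (2 * k) < r := by
          intro r hr
          obtain ⟨n, hn⟩ := exists_nat_one_div_lt hr
          obtain ⟨k, hk⟩ := hbig n
          exact ⟨k, lt_trans hk hn⟩
        have hcauchy : CauchySeq x := by
          rw [Metric.cauchySeq_iff]
          intro ε hε
          set r : ℝ := min (ε / 4) (1 / 2) with hr
          have hrpos : 0 < r := lt_min (by linarith) (by norm_num)
          have hr1 : r ≤ 1 := le_trans (min_le_right _ _) (by norm_num)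
          obtain ⟨k, hk⟩ := hzsmall r hrpos
          have hck : Tendsto (fun i => h (x i) k) atTop (𝓝 (z (2 * k))) := by
            simpa only [hfeven] using hcoord (2 * k)
          have hev : ∀ᶠ i in atTop, h (x i) k < r := hck.eventually_lt_const hk
          rw [eventually_atTop] at hev
          obtain ⟨N, hN⟩ := hev
          refine ⟨N, fun i hi j hj => ?_⟩
          have hxi : dist (x i) (u k) < r := hstrip _ k r hr1 (hN i hi)
          have hxj : dist (x j) (u k) < r := hstrip _ k r hr1 (hN j hj)
          have hrle : r ≤ ε / 4 := min_le_left _ _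
          calc dist (x i) (x j) ≤ dist (x i) (u k) + dist (u k) (x j) := dist_triangle _ _ _
            _ = dist (x i) (u k) + dist (x j) (u k) := by rw [dist_comm (u k) (x j)]
            _ < r + r := add_lt_add hxi hxj
            _ ≤ ε / 4 + ε / 4 := add_le_add hrle hrle
            _ < ε := by linarith
        obtain ⟨xl, hxl⟩ := cauchySeq_tendsto_of_complete hcauchy
        have hxlC : xl ∈ C := hCcl.mem_of_tendsto hxl (Eventually.of_forall hxC)
        have htf : Tendsto (fun i => f (x i)) atTop (𝓝 (f xl)) :=
          (hfcont.tendsto xl).comp hxl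
        have htz : Tendsto (fun i => f (x i)) atTop (𝓝 z) := by
          have : (fun i => f (x i)) = zs := funext hfx
          rw [this]; exact hz
        have hz' : f xl = z := tendsto_nhds_unique htf htz
        exact ⟨xl, hxlC, hz'⟩
    exact hseq.isClosed
  refine ⟨f, Topology.IsClosedEmbedding.of_continuous_injective_isClosedMap hfcont hinj hclosed,
    ?_⟩
  rintro - ⟨x, hx, rfl⟩
  obtain ⟨M, hM⟩ := hX₂KK x hx
  refine ⟨1 + ∑ n ∈ Finset.range M, g n x, fun m => ?_⟩
  have hsumnn : 0 ≤ ∑ n ∈ Finset.range M, g n x :=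
    Finset.sum_nonneg fun n _ => hgnonneg n x
  have hfnn : 0 ≤ f x m := by
    simp only [hf]
    split_ifs with hm
    · exact hnonneg x _
    · exact hgnonneg _ x
  rw [abs_of_nonneg hfnn]
  simp only [hf]
  split_ifs with hm
  · exact le_trans (hle1 x _) (by linarith)
  · by_cases hn : m / 2 < M
    · have hsingle : g (m / 2) x ≤ ∑ n ∈ Finset.range M, g n x :=
        Finset.single_le_sum (fun n _ => hgnonneg n x) (Finset.mem_range.2 hn)
      linarith
    · rw [hgzero (m / 2) x (hKKmono M (m / 2) (le_of_not_gt hn) hM)]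
      linarith
end
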